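/- arXiv:0903.0393 — 3 statements merged into one kernel-verified Lean document; each statement's English description precedes it below -/
import Mathlib

section
/- Let α be a C² regular closed plane curve (periodic with period 1, α′ never 0) whose signed curvature κ_s has only finitely many zeros in one period and never changes sign (α is in spiral form). Then the total absolute curvature of α over one period, ∫ |κ_s| |α′(t)| dt, equals 2π·m, where m is the number of local maxima of t ↦ ⟨α(t), w⟩ over one period for any (equivalently, every) unit vector w in the plane. -/
open Real Set
open scoped RealInnerProductSpace

noncomputable section

/-- ℝ² with the Euclidean inner product. -/
abbrev E2 : Type := EuclideanSpace ℝ (Fin 2)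

/-- The signed curvature `κ_s = (x′y″ − y′x″)/((x′)² + (y′)²)^{3/2}` of a plane
curve `α = (x, y)`. -/
def signedCurv2 (α : ℝ → E2) (t : ℝ) : ℝ :=
  (deriv (fun s => α s 0) t * deriv (deriv (fun s => α s 1)) t -
    deriv (fun s => α s 1) t * deriv (deriv (fun s => α s 0)) t) / ‖deriv α t‖ ^ 3

/-- Rotation of the plane by angle `θ`. -/
def rot2 (θ : ℝ) (x : E2) : E2 :=
  WithLp.toLp 2 ![Real.cos θ * x 0 - Real.sin θ * x 1, Real.sin θ * x 0 + Real.cos θ * x 1]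

/-- The unit normal of `α` at parameter `t`: the rotation by `π/2` of the unit
tangent vector. -/
def unitNormal (α : ℝ → E2) (t : ℝ) : E2 :=
  rot2 (Real.pi / 2) (‖deriv α t‖⁻¹ • deriv α t)

/-- The number of local maxima of a (1-periodic) real function over one period. -/
def numLocalMax (f : ℝ → ℝ) : ℕ :=
  Set.ncard {t : ℝ | t ∈ Set.Ico (0:ℝ) 1 ∧ IsLocalMax f t}

/-- The set of local extrema of a (1-periodic) real function in one period. -/
def extremaSet (f : ℝ → ℝ) : Set ℝ :=
  {t : ℝ | t ∈ Set.Ico (0:ℝ) 1 ∧ (IsLocalMax f t ∨ IsLocalMin f t)}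

/-- `μ̂(w, α)`: the number of local extrema of `t ↦ ⟪α(t), w⟫` over one period. -/
def muHat (α : ℝ → E2) (w : E2) : ℕ :=
  Set.ncard (extremaSet (fun s => ⟪α s, w⟫))

/-- `g` changes sign at `t₀`: every neighbourhood of `t₀` contains points where `g`
is positive and points where it is negative. -/
def SignChangeAt (g : ℝ → ℝ) (t₀ : ℝ) : Prop :=
  ∀ ε > 0, (∃ s : ℝ, |s - t₀| < ε ∧ 0 < g s) ∧ (∃ s : ℝ, |s - t₀| < ε ∧ g s < 0)

/-- The set of inflection points (parameters where the signed curvature vanishes) of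
`α` in one period. -/
def inflectionSet (α : ℝ → E2) : Set ℝ :=
  {t : ℝ | t ∈ Set.Ico (0:ℝ) 1 ∧ signedCurv2 α t = 0}

namespace SpiralAux
variable {α : ℝ → E2}

def X (α : ℝ → E2) : ℝ → ℝ := fun s => α s 0
def Y (α : ℝ → E2) : ℝ → ℝ := fun s => α s 1
def rr (α : ℝ → E2) : ℝ → ℝ := fun t => ‖deriv α t‖
def u0 (α : ℝ → E2) : ℝ → ℝ := fun t => deriv (X α) t / rr α t
def u1 (α : ℝ → E2) : ℝ → ℝ := fun t => deriv (Y α) t / rr α t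
def th (α : ℝ → E2) (t : ℝ) : ℝ :=
  Complex.arg (u0 α 0 + u1 α 0 * Complex.I) +
    ∫ s in (0:ℝ)..t, signedCurv2 α s * rr α s

lemma contDiff_coord (hs : ContDiff ℝ 2 α) (i : Fin 2) :
    ContDiff ℝ 2 (fun s => α s i) :=
  (EuclideanSpace.proj i : E2 →L[ℝ] ℝ).contDiff.comp hs

lemma deriv_coord (hs : ContDiff ℝ 2 α) (i : Fin 2) (t : ℝ) :
    deriv (fun s => α s i) t = deriv α t i :=
  ((EuclideanSpace.proj (i : Fin 2) : E2 →L[ℝ] ℝ).hasFDerivAt.comp_hasDerivAt t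
    ((hs.differentiable (by norm_num) t).hasDerivAt)).deriv

lemma rr_eq (hs : ContDiff ℝ 2 α) (t : ℝ) :
    rr α t = Real.sqrt (deriv (X α) t ^ 2 + deriv (Y α) t ^ 2) := by
  simp only [rr, X, Y, EuclideanSpace.norm_eq, Fin.sum_univ_two,
    Real.norm_eq_abs, sq_abs]
  rw [show deriv (X α) t = deriv α t 0 from deriv_coord hs 0 t,
    show deriv (Y α) t = deriv α t 1 from deriv_coord hs 1 t]

lemma sq_add_sq_eq (hs : ContDiff ℝ 2 α) (t : ℝ) :
    deriv (X α) t ^ 2 + deriv (Y α) t ^ 2 = rr α t ^ 2 := by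
  rw [rr_eq hs, Real.sq_sqrt (by positivity)]

lemma rr_pos (hs : ContDiff ℝ 2 α) (hreg : ∀ t, deriv α t ≠ 0) (t : ℝ) :
    0 < rr α t := norm_pos_iff.mpr (hreg t)

lemma cont_Xd (hs : ContDiff ℝ 2 α) : Continuous (deriv (X α)) :=
  ((contDiff_coord hs 0).continuous_deriv (by norm_num))
lemma cont_Yd (hs : ContDiff ℝ 2 α) : Continuous (deriv (Y α)) :=
  ((contDiff_coord hs 1).continuous_deriv (by norm_num))

lemma contDiff_Xd (hs : ContDiff ℝ 2 α) : ContDiff ℝ 1 (deriv (X α)) := by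
  have := (contDiff_coord hs 0)
  exact (contDiff_succ_iff_deriv.mp (by exact_mod_cast this)).2.2
lemma contDiff_Yd (hs : ContDiff ℝ 2 α) : ContDiff ℝ 1 (deriv (Y α)) := by
  have := (contDiff_coord hs 1)
  exact (contDiff_succ_iff_deriv.mp (by exact_mod_cast this)).2.2

lemma cont_Xdd (hs : ContDiff ℝ 2 α) : Continuous (deriv (deriv (X α))) :=
  (contDiff_Xd hs).continuous_deriv (le_refl _)
lemma cont_Ydd (hs : ContDiff ℝ 2 α) : Continuous (deriv (deriv (Y α))) :=
  (contDiff_Yd hs).continuous_deriv (le_refl _)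

lemma cont_rr (hs : ContDiff ℝ 2 α) : Continuous (rr α) := by
  have : Continuous (deriv α) := hs.continuous_deriv (by norm_num)
  exact this.norm

lemma cont_ka (hs : ContDiff ℝ 2 α) (hreg : ∀ t, deriv α t ≠ 0) :
    Continuous (signedCurv2 α) := by
  unfold signedCurv2
  have h1 : Continuous fun t => ‖deriv α t‖ ^ 3 := (cont_rr hs).pow 3
  exact (((cont_Xd hs).mul (cont_Ydd hs)).sub ((cont_Yd hs).mul (cont_Xdd hs))).div h1
    (fun t => pow_ne_zero _ (ne_of_gt (rr_pos hs hreg t)))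



lemma cont_integrand (hs : ContDiff ℝ 2 α) (hreg : ∀ t, deriv α t ≠ 0) :
    Continuous (fun s => signedCurv2 α s * rr α s) :=
  (cont_ka hs hreg).mul (cont_rr hs)

lemma hasDerivAt_th (hs : ContDiff ℝ 2 α) (hreg : ∀ t, deriv α t ≠ 0) (t : ℝ) :
    HasDerivAt (th α) (signedCurv2 α t * rr α t) t := by
  have hc := cont_integrand hs hreg
  have : HasDerivAt (fun u => ∫ s in (0:ℝ)..u, signedCurv2 α s * rr α s)
      (signedCurv2 α t * rr α t) t :=
    intervalIntegral.integral_hasDerivAt_right (hc.intervalIntegrable _ _)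
      (hc.stronglyMeasurableAtFilter _ _) hc.continuousAt
  exact this.const_add _

lemma hasDerivAt_Xd (hs : ContDiff ℝ 2 α) (t : ℝ) :
    HasDerivAt (deriv (X α)) (deriv (deriv (X α)) t) t :=
  ((contDiff_Xd hs).differentiable (by norm_num) t).hasDerivAt
lemma hasDerivAt_Yd (hs : ContDiff ℝ 2 α) (t : ℝ) :
    HasDerivAt (deriv (Y α)) (deriv (deriv (Y α)) t) t :=
  ((contDiff_Yd hs).differentiable (by norm_num) t).hasDerivAt

lemma hasDerivAt_rr (hs : ContDiff ℝ 2 α) (hreg : ∀ t, deriv α t ≠ 0) (t : ℝ) :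
    HasDerivAt (rr α)
      ((deriv (X α) t * deriv (deriv (X α)) t + deriv (Y α) t * deriv (deriv (Y α)) t)
        / rr α t) t := by
  have h1 : HasDerivAt (fun s => deriv (X α) s ^ 2 + deriv (Y α) s ^ 2)
      (2 * deriv (X α) t * deriv (deriv (X α)) t
        + 2 * deriv (Y α) t * deriv (deriv (Y α)) t) t := by
    have := ((hasDerivAt_Xd hs t).pow 2).add ((hasDerivAt_Yd hs t).pow 2)
    refine this.congr_deriv (Eq.symm ?_)
    ring
  have hpos : (0:ℝ) < deriv (X α) t ^ 2 + deriv (Y α) t ^ 2 := by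
    rw [sq_add_sq_eq hs]; exact pow_pos (rr_pos hs hreg t) 2
  have h2 := (Real.hasDerivAt_sqrt (ne_of_gt hpos)).comp t h1
  have heq : ((fun x => Real.sqrt x) ∘ fun s => deriv (X α) s ^ 2 + deriv (Y α) s ^ 2) = rr α := by
    funext s; exact (rr_eq hs s).symm
  rw [heq] at h2
  refine h2.congr_deriv (Eq.symm ?_)
  rw [← rr_eq hs]
  have hr := ne_of_gt (rr_pos hs hreg t)
  field_simp

lemma hasDerivAt_u0 (hs : ContDiff ℝ 2 α) (hreg : ∀ t, deriv α t ≠ 0) (t : ℝ) :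
    HasDerivAt (u0 α) (-(signedCurv2 α t * rr α t) * u1 α t) t := by
  have hr := ne_of_gt (rr_pos hs hreg t)
  have h := (hasDerivAt_Xd hs t).div (hasDerivAt_rr hs hreg t) hr
  refine h.congr_deriv (Eq.symm ?_)
  unfold u1 signedCurv2
  rw [show deriv (fun s => α s 0) t = deriv (X α) t from rfl,
    show deriv (fun s => α s 1) t = deriv (Y α) t from rfl,
    show deriv (deriv (fun s => α s 0)) t = deriv (deriv (X α)) t from rfl,
    show deriv (deriv (fun s => α s 1)) t = deriv (deriv (Y α)) t from rfl,
    show ‖deriv α t‖ = rr α t from rfl]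
  have hsq := (sq_add_sq_eq hs t).symm
  set a := deriv (X α) t; set b := deriv (Y α) t; set r := rr α t
  set xdd := deriv (deriv (X α)) t; set ydd := deriv (deriv (Y α)) t
  field_simp
  linear_combination (-xdd) * hsq

lemma hasDerivAt_u1 (hs : ContDiff ℝ 2 α) (hreg : ∀ t, deriv α t ≠ 0) (t : ℝ) :
    HasDerivAt (u1 α) ((signedCurv2 α t * rr α t) * u0 α t) t := by
  have hr := ne_of_gt (rr_pos hs hreg t)
  have h := (hasDerivAt_Yd hs t).div (hasDerivAt_rr hs hreg t) hr
  refine h.congr_deriv (Eq.symm ?_)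
  unfold u0 signedCurv2
  rw [show deriv (fun s => α s 0) t = deriv (X α) t from rfl,
    show deriv (fun s => α s 1) t = deriv (Y α) t from rfl,
    show deriv (deriv (fun s => α s 0)) t = deriv (deriv (X α)) t from rfl,
    show deriv (deriv (fun s => α s 1)) t = deriv (deriv (Y α)) t from rfl,
    show ‖deriv α t‖ = rr α t from rfl]
  have hsq := (sq_add_sq_eq hs t).symm
  set a := deriv (X α) t; set b := deriv (Y α) t; set r := rr α t
  set xdd := deriv (deriv (X α)) t; set ydd := deriv (deriv (Y α)) t
  field_simp
  linear_combination (-ydd) * hsq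

lemma u_sq (hs : ContDiff ℝ 2 α) (hreg : ∀ t, deriv α t ≠ 0) (t : ℝ) :
    u0 α t ^ 2 + u1 α t ^ 2 = 1 := by
  have hr := ne_of_gt (rr_pos hs hreg t)
  unfold u0 u1
  field_simp
  exact sq_add_sq_eq hs t

lemma u_eq_cos_sin (hs : ContDiff ℝ 2 α) (hreg : ∀ t, deriv α t ≠ 0) (t : ℝ) :
    u0 α t = Real.cos (th α t) ∧ u1 α t = Real.sin (th α t) := by
  set h : ℝ → ℝ := fun s => u0 α s * Real.cos (th α s) + u1 α s * Real.sin (th α s) with hh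
  have hderiv : ∀ s, HasDerivAt h 0 s := by
    intro s
    have h1 := (hasDerivAt_u0 hs hreg s).mul ((hasDerivAt_th hs hreg s).cos)
    have h2 := (hasDerivAt_u1 hs hreg s).mul ((hasDerivAt_th hs hreg s).sin)
    have := h1.add h2
    refine this.congr_deriv (Eq.symm ?_)
    ring
  have hconst : ∀ s, h s = h 0 := by
    intro s
    have : ∀ x y : ℝ, h x = h y :=
      is_const_of_deriv_eq_zero (fun x => (hderiv x).differentiableAt)
        (fun x => (hderiv x).deriv)
    exact this s 0
  have h0 : h 0 = 1 := by
    have hz : (↑(u0 α 0) + ↑(u1 α 0) * Complex.I : ℂ) ≠ 0 := by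
      intro hzero
      have hre : u0 α 0 = 0 := by
        have := congrArg Complex.re hzero; simpa using this
      have him : u1 α 0 = 0 := by
        have := congrArg Complex.im hzero; simpa using this
      have := u_sq hs hreg 0
      rw [hre, him] at this; norm_num at this
    have habs : ‖(↑(u0 α 0) + ↑(u1 α 0) * Complex.I : ℂ)‖ = 1 := by
      rw [Complex.norm_def, Complex.normSq_add_mul_I]
      rw [← Real.sqrt_one]
      congr 1
      exact u_sq hs hreg 0
    have hth0 : th α 0 = Complex.arg (↑(u0 α 0) + ↑(u1 α 0) * Complex.I) := by
      simp [th]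
    have hcos : Real.cos (th α 0) = u0 α 0 := by
      rw [hth0, Complex.cos_arg hz, habs]
      simp
    have hsin : Real.sin (th α 0) = u1 α 0 := by
      rw [hth0, Complex.sin_arg, habs]
      simp
    show u0 α 0 * Real.cos (th α 0) + u1 α 0 * Real.sin (th α 0) = 1
    rw [hcos, hsin]
    nlinarith [u_sq hs hreg 0]
  have hht : h t = 1 := (hconst t).trans h0
  have key : (u0 α t - Real.cos (th α t))^2 + (u1 α t - Real.sin (th α t))^2 = 0 := by
    have h1 := u_sq hs hreg t
    have h2 : Real.cos (th α t)^2 + Real.sin (th α t)^2 = 1 := by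
      exact Real.cos_sq_add_sin_sq (th α t)
    have : u0 α t * Real.cos (th α t) + u1 α t * Real.sin (th α t) = 1 := hht
    nlinarith
  constructor
  · nlinarith [sq_nonneg (u0 α t - Real.cos (th α t)), sq_nonneg (u1 α t - Real.sin (th α t))]
  · nlinarith [sq_nonneg (u0 α t - Real.cos (th α t)), sq_nonneg (u1 α t - Real.sin (th α t))]


section Count
variable {θ r f : ℝ → ℝ} {φ : ℝ}

/-- If `θ t0 ≡ φ + π/2 [2π]` then `t0` is a local max of `f`. -/
lemma isLocalMax_of_theta (hθc : Continuous θ) (hθm : StrictMono θ)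
    (hrpos : ∀ t, 0 < r t)
    (hf : ∀ t, HasDerivAt f (r t * Real.cos (θ t - φ)) t)
    {t0 : ℝ} {k : ℤ} (ht0 : θ t0 = φ + π / 2 + 2 * π * k) :
    IsLocalMax f t0 := by
  have hev : ∀ᶠ t in nhds t0, |θ t - θ t0| < π / 2 := by
    have := (hθc.continuousAt (x := t0)).tendsto
    have h2 : Set.Ioo (θ t0 - π/2) (θ t0 + π/2) ∈ nhds (θ t0) :=
      Ioo_mem_nhds (by linarith [pi_pos]) (by linarith [pi_pos])
    filter_upwards [this h2] with t ht
    rw [abs_lt]; exact ⟨by linarith [ht.1], by linarith [ht.2]⟩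
  obtain ⟨δ, hδpos, hδ⟩ := Metric.eventually_nhds_iff.mp hev
  set δ' := δ / 2 with hδ'
  have hδ'pos : 0 < δ' := by positivity
  have hsmall : ∀ t, t ∈ Set.Icc (t0 - δ') (t0 + δ') → |θ t - θ t0| < π / 2 := by
    intro t ht
    apply hδ
    rw [Real.dist_eq, abs_lt]
    constructor <;> [linarith [ht.1]; linarith [ht.2]]
  have hcosval : ∀ t, Real.cos (θ t - φ) = -Real.sin (θ t - θ t0) := by
    intro t
    have : θ t - φ = (θ t - θ t0) + π/2 + 2 * π * k := by rw [ht0]; ring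
    rw [this]
    rw [show (θ t - θ t0) + π/2 + 2*π*k = ((θ t - θ t0) + π/2) + (k : ℝ) * (2*π) by ring]
    rw [Real.cos_add_int_mul_two_pi, Real.cos_add_pi_div_two]
  -- derivative positive strictly left, negative strictly right
  have hpos : ∀ t ∈ Set.Ioo (t0 - δ') t0, 0 < deriv f t := by
    intro t ht
    rw [(hf t).deriv, hcosval t]
    have h1 : θ t < θ t0 := hθm ht.2
    have h2 : |θ t - θ t0| < π/2 := hsmall t ⟨le_of_lt ht.1, by linarith [ht.2]⟩
    have : Real.sin (θ t - θ t0) < 0 := by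
      apply Real.sin_neg_of_neg_of_neg_pi_lt (by linarith)
      have := abs_lt.mp h2
      linarith [pi_pos, this.1]
    have := hrpos t
    nlinarith
  have hneg : ∀ t ∈ Set.Ioo t0 (t0 + δ'), deriv f t < 0 := by
    intro t ht
    rw [(hf t).deriv, hcosval t]
    have h1 : θ t0 < θ t := hθm ht.1
    have h2 : |θ t - θ t0| < π/2 := hsmall t ⟨by linarith [ht.1], le_of_lt ht.2⟩
    have : 0 < Real.sin (θ t - θ t0) := by
      apply Real.sin_pos_of_pos_of_lt_pi (by linarith)
      have := abs_lt.mp h2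
      linarith [pi_pos, this.2]
    have := hrpos t
    nlinarith
  have hdiff : Differentiable ℝ f := fun t => (hf t).differentiableAt
  have hmono : StrictMonoOn f (Set.Icc (t0 - δ') t0) := by
    apply strictMonoOn_of_deriv_pos (convex_Icc _ _) (hdiff.continuous.continuousOn)
    intro t ht
    rw [interior_Icc] at ht
    exact hpos t ht
  have hanti : StrictAntiOn f (Set.Icc t0 (t0 + δ')) := by
    apply strictAntiOn_of_deriv_neg (convex_Icc _ _) (hdiff.continuous.continuousOn)
    intro t ht
    rw [interior_Icc] at ht
    exact hneg t ht
  have hmem : Set.Icc (t0 - δ') (t0 + δ') ∈ nhds t0 :=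
    Icc_mem_nhds (by linarith) (by linarith)
  refine Filter.eventually_of_mem hmem ?_
  intro t ht
  rcases le_or_gt t t0 with h | h
  · rcases eq_or_lt_of_le h with rfl | hlt
    · exact le_refl _
    · exact le_of_lt (hmono ⟨ht.1, h⟩ ⟨by linarith, le_refl _⟩ hlt)
  · exact le_of_lt (hanti ⟨le_refl _, by linarith⟩ ⟨le_of_lt h, ht.2⟩ h)

/-- If `θ t0 ≡ φ - π/2 [2π]` then `t0` is NOT a local max of `f`. -/
lemma not_isLocalMax_of_theta (hθc : Continuous θ) (hθm : StrictMono θ)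
    (hrpos : ∀ t, 0 < r t)
    (hf : ∀ t, HasDerivAt f (r t * Real.cos (θ t - φ)) t)
    {t0 : ℝ} {k : ℤ} (ht0 : θ t0 = φ - π / 2 + 2 * π * k) :
    ¬ IsLocalMax f t0 := by
  intro hmax
  have hev : ∀ᶠ t in nhds t0, |θ t - θ t0| < π / 2 := by
    have := (hθc.continuousAt (x := t0)).tendsto
    have h2 : Set.Ioo (θ t0 - π/2) (θ t0 + π/2) ∈ nhds (θ t0) :=
      Ioo_mem_nhds (by linarith [pi_pos]) (by linarith [pi_pos])
    filter_upwards [this h2] with t ht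
    rw [abs_lt]; exact ⟨by linarith [ht.1], by linarith [ht.2]⟩
  obtain ⟨δ, hδpos, hδ⟩ := Metric.eventually_nhds_iff.mp hev
  set δ' := δ / 2 with hδ'
  have hδ'pos : 0 < δ' := by positivity
  have hsmall : ∀ t, t ∈ Set.Icc t0 (t0 + δ') → |θ t - θ t0| < π / 2 := by
    intro t ht
    apply hδ
    rw [Real.dist_eq, abs_lt]
    constructor <;> [linarith [ht.1]; linarith [ht.2]]
  have hcosval : ∀ t, Real.cos (θ t - φ) = Real.sin (θ t - θ t0) := by
    intro t
    have : θ t - φ = ((θ t - θ t0) - π/2) + (k:ℝ) * (2 * π) := by rw [ht0]; ring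
    rw [this, Real.cos_add_int_mul_two_pi, Real.cos_sub_pi_div_two]
  have hpos : ∀ t ∈ Set.Ioo t0 (t0 + δ'), 0 < deriv f t := by
    intro t ht
    rw [(hf t).deriv, hcosval t]
    have h1 : θ t0 < θ t := hθm ht.1
    have h2 : |θ t - θ t0| < π/2 := hsmall t ⟨le_of_lt ht.1, le_of_lt ht.2⟩
    have : 0 < Real.sin (θ t - θ t0) := by
      apply Real.sin_pos_of_pos_of_lt_pi (by linarith)
      have := abs_lt.mp h2
      linarith [pi_pos, this.2]
    have := hrpos t
    nlinarith
  have hdiff : Differentiable ℝ f := fun t => (hf t).differentiableAt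
  have hmono : StrictMonoOn f (Set.Icc t0 (t0 + δ')) := by
    apply strictMonoOn_of_deriv_pos (convex_Icc _ _) (hdiff.continuous.continuousOn)
    intro t ht
    rw [interior_Icc] at ht
    exact hpos t ht
  obtain ⟨ε, hεpos, hε⟩ := Metric.eventually_nhds_iff.mp hmax
  set t1 := t0 + min δ' ε / 2 with ht1
  have hminpos : 0 < min δ' ε := lt_min hδ'pos hεpos
  have ht1mem : t1 ∈ Set.Icc t0 (t0 + δ') := by
    constructor
    · simp only [ht1]; linarith
    · simp only [ht1]; have := min_le_left δ' ε; linarith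
  have h1 : f t0 < f t1 := hmono ⟨le_refl _, by linarith⟩ ht1mem (by simp only [ht1]; linarith)
  have h2 : f t1 ≤ f t0 := by
    apply hε
    rw [Real.dist_eq, ht1]
    have := min_le_right δ' ε
    rw [abs_of_pos (by linarith)]
    linarith
  linarith

end Count

lemma ncard_int_Ico (a b : ℤ) : (Set.Ico a b).ncard = (b - a).toNat := by
  rw [← Finset.coe_Ico, Set.ncard_coe_finset, Int.card_Ico]

lemma count_level {θ : ℝ → ℝ} (hθc : Continuous θ) (hθm : StrictMono θ) (n : ℕ)
    (hθ1 : θ 1 = θ 0 + 2 * π * n) (c : ℝ) :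
    {t : ℝ | t ∈ Set.Ico (0:ℝ) 1 ∧ ∃ k : ℤ, θ t = c + 2 * π * k}.ncard = n := by
  have h2π : (0:ℝ) < 2 * π := by positivity
  set k0 : ℤ := ⌈(θ 0 - c) / (2 * π)⌉ with hk0
  set S := {t : ℝ | t ∈ Set.Ico (0:ℝ) 1 ∧ ∃ k : ℤ, θ t = c + 2 * π * k} with hS
  set V := {v : ℝ | v ∈ Set.Ico (θ 0) (θ 1) ∧ ∃ k : ℤ, v = c + 2 * π * k} with hV
  have himg : θ '' S = V := by
    apply Set.Subset.antisymm
    · rintro v ⟨t, ⟨⟨ht0, ht1⟩, k, hk⟩, rfl⟩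
      refine ⟨⟨hθm.monotone ht0, hθm ht1⟩, k, hk⟩
    · rintro v ⟨⟨hv0, hv1⟩, k, hk⟩
      have hsub := intermediate_value_Icc (by norm_num : (0:ℝ) ≤ 1) hθc.continuousOn
      obtain ⟨t, ht, hθt⟩ := hsub ⟨hv0, le_of_lt hv1⟩
      have ht1 : t < 1 := by
        rcases lt_or_eq_of_le ht.2 with h | rfl
        · exact h
        · exact absurd hθt.symm (ne_of_lt hv1)
      exact ⟨t, ⟨⟨ht.1, ht1⟩, k, hθt.trans hk⟩, hθt⟩
  have hK : V = (fun k : ℤ => c + 2 * π * k) '' (Set.Ico k0 (k0 + n)) := by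
    ext v
    simp only [hV, Set.mem_setOf_eq, Set.mem_image, Set.mem_Ico]
    constructor
    · rintro ⟨⟨hv0, hv1⟩, k, rfl⟩
      refine ⟨k, ⟨?_, ?_⟩, rfl⟩
      · rw [hk0, Int.ceil_le, div_le_iff₀ h2π]
        linarith [mul_comm (2*π) (k:ℝ)]
      · by_contra hcon
        push_neg at hcon
        have h1 : (k0 : ℝ) ≤ (k : ℝ) - n := by exact_mod_cast by linarith [hcon]
        have h2 : (θ 0 - c) / (2 * π) ≤ (k0 : ℝ) := Int.le_ceil _
        have h3 : (θ 0 - c) / (2 * π) ≤ (k:ℝ) - n := h2.trans h1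
        rw [div_le_iff₀ h2π] at h3
        rw [hθ1] at hv1
        nlinarith
    · rintro ⟨k, ⟨hk1, hk2⟩, rfl⟩
      refine ⟨⟨?_, ?_⟩, k, rfl⟩
      · have := (Int.ceil_le (z := k)).mp (by exact_mod_cast hk1)
        rw [div_le_iff₀ h2π] at this
        linarith [mul_comm (2*π) (k:ℝ)]
      · have hlt : k - n < k0 := by omega
        have : ¬ ((θ 0 - c) / (2*π) ≤ ((k : ℝ) - n)) := by
          intro hcon
          have := Int.ceil_le.mpr (by exact_mod_cast hcon : (θ 0 - c)/(2*π) ≤ ((k - n : ℤ) : ℝ))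
          omega
        push_neg at this
        rw [lt_div_iff₀ h2π] at this
        rw [hθ1]
        nlinarith
  have hinj : Function.Injective (fun k : ℤ => c + 2 * π * k) := by
    intro a b hab
    simp only at hab
    have : (a : ℝ) = b := by
      have := mul_left_cancel₀ (ne_of_gt h2π) (by linarith : 2*π*(a:ℝ) = 2*π*b)
      exact this
    exact_mod_cast this
  calc S.ncard = (θ '' S).ncard := (Set.ncard_image_of_injective S hθm.injective).symm
    _ = ((fun k : ℤ => c + 2 * π * k) '' (Set.Ico k0 (k0 + n))).ncard := by rw [himg, hK]
    _ = (Set.Ico k0 (k0 + n)).ncard := Set.ncard_image_of_injective _ hinj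
    _ = n := by rw [ncard_int_Ico]; omega


/-- derivative of a periodic function is periodic -/
lemma periodic_deriv {f : ℝ → ℝ} (hf : Function.Periodic f 1) :
    Function.Periodic (deriv f) 1 := by
  intro t
  have : (fun x => f (x + 1)) = f := funext fun x => hf x
  calc deriv f (t + 1) = deriv (fun x => f (x + 1)) t := (deriv_comp_add_const f 1 t).symm
    _ = deriv f t := by rw [this]

lemma periodic_derivE {f : ℝ → E2} (hf : Function.Periodic f 1) :
    Function.Periodic (deriv f) 1 := by
  intro t
  have : (fun x => f (x + 1)) = f := funext fun x => hf x
  calc deriv f (t + 1) = deriv (fun x => f (x + 1)) t := (deriv_comp_add_const f 1 t).symm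
    _ = deriv f t := by rw [this]

lemma periodic_X (hper : Function.Periodic α 1) : Function.Periodic (X α) 1 :=
  fun t => congrArg (fun v : E2 => v 0) (hper t)
lemma periodic_Y (hper : Function.Periodic α 1) : Function.Periodic (Y α) 1 :=
  fun t => congrArg (fun v : E2 => v 1) (hper t)
lemma periodic_rr (hper : Function.Periodic α 1) : Function.Periodic (rr α) 1 :=
  fun t => congrArg norm (periodic_derivE hper t)
lemma periodic_ka (hper : Function.Periodic α 1) :
    Function.Periodic (signedCurv2 α) 1 := by
  intro t
  show (deriv (X α) (t+1) * deriv (deriv (Y α)) (t+1) -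
      deriv (Y α) (t+1) * deriv (deriv (X α)) (t+1)) / ‖deriv α (t+1)‖ ^ 3
    = (deriv (X α) t * deriv (deriv (Y α)) t -
      deriv (Y α) t * deriv (deriv (X α)) t) / ‖deriv α t‖ ^ 3
  rw [periodic_deriv (periodic_X hper) t, periodic_deriv (periodic_Y hper) t,
    periodic_deriv (periodic_deriv (periodic_X hper)) t,
    periodic_deriv (periodic_deriv (periodic_Y hper)) t,
    periodic_derivE hper t]

/-- positivity of an interval integral of a nonneg continuous function positive
somewhere -/
lemma integral_pos_of_exists {g : ℝ → ℝ} (hg : Continuous g) (hnn : ∀ t, 0 ≤ g t)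
    {a b x : ℝ} (hab : a < b) (hx : x ∈ Set.Icc a b) (hgx : 0 < g x) :
    0 < ∫ t in a..b, g t := by
  obtain ⟨δ, hδpos, hδ⟩ := Metric.eventually_nhds_iff.mp
    ((hg.continuousAt (x := x)).eventually (eventually_gt_nhds hgx))
  set a' := max a (x - δ/2) with ha'
  set b' := min b (x + δ/2) with hb'
  have haa' : a ≤ a' := le_max_left _ _
  have hb'b : b' ≤ b := min_le_left _ _
  have hax : a' ≤ x := max_le hx.1 (by linarith)
  have ha'b' : a' < b' := by
    rcases lt_or_eq_of_le hx.2 with hxb | hxb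
    · have : x < b' := lt_min hxb (by linarith)
      linarith
    · have ha'x : a' < x := max_lt (by linarith [hx.1, hab]) (by linarith)
      have hbx : b' = x := by
        rw [hb', ← hxb]
        exact min_eq_left (by linarith)
      linarith
  have hsub : ∀ y ∈ Set.Ioo a' b', 0 < g y := by
    intro y hy
    apply hδ
    rw [Real.dist_eq, abs_lt]
    constructor
    · have : x - δ/2 ≤ a' := le_max_right _ _
      linarith [hy.1]
    · have : b' ≤ x + δ/2 := min_le_right _ _
      linarith [hy.2]
  have key : 0 < ∫ t in a'..b', g t :=
    intervalIntegral.intervalIntegral_pos_of_pos_on (hg.intervalIntegrable _ _) hsub ha'b'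
  have h1 : 0 ≤ ∫ t in a..a', g t :=
    intervalIntegral.integral_nonneg haa' (fun u _ => hnn u)
  have h2 : 0 ≤ ∫ t in b'..b, g t :=
    intervalIntegral.integral_nonneg hb'b (fun u _ => hnn u)
  have e1 : (∫ t in a..a', g t) + (∫ t in a'..b', g t) = ∫ t in a..b', g t :=
    intervalIntegral.integral_add_adjacent_intervals (hg.intervalIntegrable _ _)
      (hg.intervalIntegrable _ _)
  have e2 : (∫ t in a..b', g t) + (∫ t in b'..b, g t) = ∫ t in a..b, g t :=
    intervalIntegral.integral_add_adjacent_intervals (hg.intervalIntegrable _ _)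
      (hg.intervalIntegrable _ _)
  linarith


lemma th_sub (hs : ContDiff ℝ 2 α) (hreg : ∀ t, deriv α t ≠ 0) (s t : ℝ) :
    th α t - th α s = ∫ x in s..t, signedCurv2 α x * rr α x := by
  have hc := cont_integrand hs hreg
  unfold th
  rw [← intervalIntegral.integral_add_adjacent_intervals
    (hc.intervalIntegrable 0 s) (hc.intervalIntegrable s t)]
  ring

/-- Strict monotonicity of `ε • th`. -/
lemma strictMono_th (hs : ContDiff ℝ 2 α) (hreg : ∀ t, deriv α t ≠ 0)
    (hper : Function.Periodic α 1) (hfin : (inflectionSet α).Finite)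
    {ε : ℝ} (hε : ε = 1 ∨ ε = -1)
    (hnn : ∀ t, 0 ≤ ε * signedCurv2 α t) :
    StrictMono (fun t => ε * th α t) := by
  have hεne : ε ≠ 0 := by rcases hε with rfl | rfl <;> norm_num
  have hg : ∀ t, 0 ≤ ε * (signedCurv2 α t * rr α t) := by
    intro t
    have := mul_nonneg (hnn t) (le_of_lt (rr_pos hs hreg t))
    linarith [this]
  have hgc : Continuous (fun t => ε * (signedCurv2 α t * rr α t)) :=
    continuous_const.mul (cont_integrand hs hreg)
  have hmono : Monotone (fun t => ε * th α t) := by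
    apply monotone_of_deriv_nonneg
    · exact fun t => (((hasDerivAt_th hs hreg t).const_mul ε)).differentiableAt
    · intro t
      rw [((hasDerivAt_th hs hreg t).const_mul ε).deriv]
      exact hg t
  apply hmono.strictMono_of_injective
  intro s t hst
  by_contra hne
  -- wlog s < t
  have key : ∀ s t : ℝ, s < t → ε * th α s = ε * th α t → False := by
    intro s t hlt heq
    have hzero : ∀ x ∈ Set.Icc s t, signedCurv2 α x = 0 := by
      intro x hx
      by_contra hkx
      have hgx : 0 < ε * (signedCurv2 α x * rr α x) := by
        rcases lt_or_gt_of_ne (fun h => hkx h : signedCurv2 α x ≠ 0) with h | h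
        · have := hg x
          have hr := rr_pos hs hreg x
          rcases hε with rfl | rfl
          · nlinarith [hnn x]
          · nlinarith
        · have hr := rr_pos hs hreg x
          rcases hε with rfl | rfl
          · nlinarith
          · nlinarith [hnn x]
      have hpos := integral_pos_of_exists hgc hg hlt hx hgx
      have : ∫ x in s..t, ε * (signedCurv2 α x * rr α x)
          = ε * (th α t - th α s) := by
        rw [th_sub hs hreg s t, intervalIntegral.integral_const_mul]
      rw [this] at hpos
      have : ε * (th α t - th α s) = 0 := by ring_nf; linarith [heq]
      linarith
    -- infinitely many zeros of curvature: contradiction with hfin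
    set t' := min t (s + 1/2) with ht'
    have hst' : s < t' := lt_min hlt (by linarith)
    have hsub : Set.Ioo s t' ⊆ Set.Icc s t := fun x hx =>
      ⟨le_of_lt hx.1, le_of_lt (lt_of_lt_of_le hx.2 (min_le_left _ _))⟩
    have hinj : Set.InjOn Int.fract (Set.Ioo s t') := by
      intro a ha b hb hab
      obtain ⟨z, hz⟩ := Int.fract_eq_fract.mp hab
      have hlen : t' - s ≤ 1/2 := by
        have := min_le_right t (s + 1/2)
        linarith
      have : |a - b| < 1 := by
        rw [abs_lt]
        constructor <;> [linarith [ha.1, hb.2, hlen]; linarith [ha.2, hb.1, hlen]]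
      rw [hz] at this
      have hz0 : z = 0 := by
        have h3 : ((|z| : ℤ) : ℝ) < 1 := by rwa [← Int.cast_abs] at this
        have h2 : |z| < 1 := by exact_mod_cast h3
        rcases abs_lt.mp h2 with ⟨h4, h5⟩
        omega
      rw [hz0] at hz
      push_cast at hz
      linarith
    have himage : Int.fract '' (Set.Ioo s t') ⊆ inflectionSet α := by
      rintro _ ⟨y, hy, rfl⟩
      refine ⟨⟨Int.fract_nonneg y, Int.fract_lt_one y⟩, ?_⟩
      have : signedCurv2 α (Int.fract y) = signedCurv2 α y := by
        have h := ((periodic_ka hper).int_mul ⌊y⌋).sub_eq y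
        rw [Int.fract]
        simpa using h
      rw [this]
      exact hzero y (hsub hy)
    have hfin2 : (Int.fract '' (Set.Ioo s t')).Finite := hfin.subset himage
    have : (Set.Ioo s t').Finite := Set.Finite.of_finite_image hfin2 hinj
    exact (Set.Ioo_infinite hst') this
  rcases lt_trichotomy s t with h | h | h
  · exact key s t h hst
  · exact hne h
  · exact key t s h hst.symm

/-- the turning number: `th 1 - th 0` is an integer multiple of `2π`. -/
lemma closed_turning (hs : ContDiff ℝ 2 α) (hreg : ∀ t, deriv α t ≠ 0)
    (hper : Function.Periodic α 1) :
    ∃ n : ℤ, th α 1 = th α 0 + 2 * π * n := by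
  have hu0 : u0 α 1 = u0 α 0 := by
    have h1 := periodic_deriv (periodic_X hper) 0
    have h2 := periodic_rr hper 0
    unfold u0
    norm_num at h1 h2 ⊢
    rw [h1, h2]
  have hu1 : u1 α 1 = u1 α 0 := by
    have h1 := periodic_deriv (periodic_Y hper) 0
    have h2 := periodic_rr hper 0
    unfold u1
    norm_num at h1 h2 ⊢
    rw [h1, h2]
  have hcos : Real.cos (th α 1) = Real.cos (th α 0) := by
    rw [← (u_eq_cos_sin hs hreg 1).1, ← (u_eq_cos_sin hs hreg 0).1, hu0]
  have hsin : Real.sin (th α 1) = Real.sin (th α 0) := by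
    rw [← (u_eq_cos_sin hs hreg 1).2, ← (u_eq_cos_sin hs hreg 0).2, hu1]
  have hexp : Complex.exp (↑(th α 1) * Complex.I) = Complex.exp (↑(th α 0) * Complex.I) := by
    rw [Complex.exp_mul_I, Complex.exp_mul_I, ← Complex.ofReal_cos, ← Complex.ofReal_cos,
      ← Complex.ofReal_sin, ← Complex.ofReal_sin, hcos, hsin]
  obtain ⟨n, hn⟩ := Complex.exp_eq_exp_iff_exists_int.mp hexp
  refine ⟨n, ?_⟩
  have := congrArg Complex.im hn
  simp [Complex.add_im, Complex.mul_im, Complex.I_im, Complex.I_re,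
    Complex.ofReal_re, Complex.ofReal_im] at this
  linarith [this]


lemma cos_sin_arg {a b : ℝ} (hab : a ^ 2 + b ^ 2 = 1) :
    Real.cos (Complex.arg (a + b * Complex.I)) = a ∧
      Real.sin (Complex.arg (a + b * Complex.I)) = b := by
  have hz : (↑a + ↑b * Complex.I : ℂ) ≠ 0 := by
    intro hzero
    have hre : a = 0 := by have := congrArg Complex.re hzero; simpa using this
    have him : b = 0 := by have := congrArg Complex.im hzero; simpa using this
    rw [hre, him] at hab; norm_num at hab
  have habs : ‖(↑a + ↑b * Complex.I : ℂ)‖ = 1 := by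
    rw [Complex.norm_def, Complex.normSq_add_mul_I, ← Real.sqrt_one]
    congr 1
  constructor
  · rw [Complex.cos_arg hz, habs]; simp
  · rw [Complex.sin_arg, habs]; simp

lemma cnt {θ r f : ℝ → ℝ} {φ : ℝ} (n : ℕ)
    (hθc : Continuous θ) (hθm : StrictMono θ)
    (hθ1 : θ 1 = θ 0 + 2 * π * n)
    (hrpos : ∀ t, 0 < r t)
    (hf : ∀ t, HasDerivAt f (r t * Real.cos (θ t - φ)) t) :
    numLocalMax f = n := by
  have hset : {t : ℝ | t ∈ Set.Ico (0:ℝ) 1 ∧ IsLocalMax f t}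
      = {t : ℝ | t ∈ Set.Ico (0:ℝ) 1 ∧ ∃ k : ℤ, θ t = (φ + π/2) + 2*π*k} := by
    ext t
    simp only [Set.mem_setOf_eq, and_congr_right_iff]
    intro ht
    constructor
    · intro hmax
      have hd : deriv f t = 0 := hmax.deriv_eq_zero
      rw [(hf t).deriv] at hd
      have hcos : Real.cos (θ t - φ) = 0 := by
        rcases mul_eq_zero.mp hd with h | h
        · exact absurd h (ne_of_gt (hrpos t))
        · exact h
      obtain ⟨j, hj⟩ := Real.cos_eq_zero_iff.mp hcos
      rcases Int.even_or_odd j with ⟨k, hk⟩ | ⟨k, hk⟩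
      · refine ⟨k, ?_⟩
        rw [hk] at hj
        push_cast at hj ⊢
        linarith
      · exfalso
        have ht0 : θ t = φ - π/2 + 2 * π * ((k + 1 : ℤ) : ℝ) := by
          rw [hk] at hj
          push_cast at hj ⊢
          linarith
        exact not_isLocalMax_of_theta hθc hθm hrpos hf ht0 hmax
    · rintro ⟨k, hk⟩
      exact isLocalMax_of_theta hθc hθm hrpos hf
        (by linarith [hk] : θ t = φ + π/2 + 2 * π * (k:ℝ))
  rw [numLocalMax, hset]
  exact count_level hθc hθm n hθ1 _


end SpiralAux

open SpiralAux in
/-- The total absolute curvature over one period of a closed regular C² plane curve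
in spiral form equals `2π` times its spiral number, i.e. `2π` times the number of
local maxima with respect to any unit direction `w` in the plane. -/
theorem total_curvature_of_spiral_form (α : ℝ → E2)
    (hsmooth : ContDiff ℝ 2 α) (hper : Function.Periodic α 1)
    (hreg : ∀ t : ℝ, deriv α t ≠ 0)
    (hfin : (inflectionSet α).Finite)
    (hspiral : (∀ t : ℝ, 0 ≤ signedCurv2 α t) ∨ (∀ t : ℝ, signedCurv2 α t ≤ 0))
    (w : E2) (hw : ‖w‖ = 1) (m : ℕ)
    (hm : numLocalMax (fun t => ⟪α t, w⟫) = m) :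
    ∫ t in (0:ℝ)..1, |signedCurv2 α t| * ‖deriv α t‖ = 2 * Real.pi * m := by
  -- choose the sign ε
  obtain ⟨ε, hε, hnn⟩ : ∃ ε : ℝ, (ε = 1 ∨ ε = -1) ∧ ∀ t, 0 ≤ ε * signedCurv2 α t := by
    rcases hspiral with h | h
    · exact ⟨1, Or.inl rfl, fun t => by linarith [h t]⟩
    · exact ⟨-1, Or.inr rfl, fun t => by linarith [h t]⟩
  -- the direction angle of w
  have hw2 : w 0 ^ 2 + w 1 ^ 2 = 1 := by
    have := hw
    rw [EuclideanSpace.norm_eq, Fin.sum_univ_two, Real.norm_eq_abs, Real.norm_eq_abs,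
      sq_abs, sq_abs] at this
    nlinarith [Real.sq_sqrt (by positivity : (0:ℝ) ≤ w 0 ^ 2 + w 1 ^ 2),
      Real.sqrt_nonneg (w 0 ^ 2 + w 1 ^ 2)]
  obtain ⟨hcosφ, hsinφ⟩ := cos_sin_arg hw2
  set φ := Complex.arg (↑(w 0) + ↑(w 1) * Complex.I) with hφ
  -- the inner product function and its derivative
  set f : ℝ → ℝ := fun t => ⟪α t, w⟫ with hf
  have hXd : ∀ t, HasDerivAt (X α) (deriv (X α) t) t := fun t =>
    (((contDiff_coord hsmooth 0).differentiable (by norm_num)) t).hasDerivAt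
  have hYd : ∀ t, HasDerivAt (Y α) (deriv (Y α) t) t := fun t =>
    (((contDiff_coord hsmooth 1).differentiable (by norm_num)) t).hasDerivAt
  have hfeq : f = fun t => X α t * w 0 + Y α t * w 1 := by
    funext t
    simp [hf, PiLp.inner_apply, Fin.sum_univ_two, RCLike.inner_apply, X, Y, mul_comm]
  have hXdval : ∀ t, deriv (X α) t = rr α t * Real.cos (th α t) := by
    intro t
    have h1 := (u_eq_cos_sin hsmooth hreg t).1
    have hr := ne_of_gt (rr_pos hsmooth hreg t)
    simp only [u0] at h1
    rw [div_eq_iff hr] at h1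
    linarith [h1]
  have hYdval : ∀ t, deriv (Y α) t = rr α t * Real.sin (th α t) := by
    intro t
    have h1 := (u_eq_cos_sin hsmooth hreg t).2
    have hr := ne_of_gt (rr_pos hsmooth hreg t)
    simp only [u1] at h1
    rw [div_eq_iff hr] at h1
    linarith [h1]
  have hfd : ∀ t, HasDerivAt f (rr α t * Real.cos (th α t - φ)) t := by
    intro t
    rw [hfeq]
    have := ((hXd t).mul_const (w 0)).add ((hYd t).mul_const (w 1))
    refine this.congr_deriv (Eq.symm ?_)
    rw [hXdval, hYdval, Real.cos_sub, hcosφ, hsinφ]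
    ring
  -- the angle map Θ = ε • th is strictly monotone, continuous
  set Θ : ℝ → ℝ := fun t => ε * th α t with hΘ
  have hΘm : StrictMono Θ := strictMono_th hsmooth hreg hper hfin hε hnn
  have hΘc : Continuous Θ := by
    have : Continuous (th α) := by
      have : Differentiable ℝ (th α) := fun t => (hasDerivAt_th hsmooth hreg t).differentiableAt
      exact this.continuous
    exact continuous_const.mul this
  have hε2 : ε * ε = 1 := by rcases hε with rfl | rfl <;> norm_num
  have hfd' : ∀ t, HasDerivAt f (rr α t * Real.cos (Θ t - ε * φ)) t := by
    intro t
    have := hfd t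
    convert this using 2
    rcases hε with rfl | rfl
    · simp [hΘ]
    · simp only [hΘ]
      rw [show -1 * th α t - -1 * φ = -(th α t - φ) by ring, Real.cos_neg]
  -- integral value
  obtain ⟨nn, hnn1⟩ := closed_turning hsmooth hreg hper
  set I : ℝ := ∫ s in (0:ℝ)..1, signedCurv2 α s * rr α s with hI
  have hI1 : I = th α 1 - th α 0 := by rw [hI, ← th_sub hsmooth hreg 0 1]
  -- ε * I > 0
  have hIpos : 0 < ε * I := by
    obtain ⟨x, hx⟩ : ∃ x, x ∈ Set.Ioo (0:ℝ) 1 \ inflectionSet α :=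
      ((Set.Ioo_infinite (by norm_num : (0:ℝ) < 1)).diff hfin).nonempty
    have hxIoo : x ∈ Set.Ioo (0:ℝ) 1 := hx.1
    have hkx : signedCurv2 α x ≠ 0 := by
      intro h
      exact hx.2 ⟨⟨le_of_lt hxIoo.1, hxIoo.2⟩, h⟩
    have hgx : 0 < ε * (signedCurv2 α x * rr α x) := by
      have hr := rr_pos hsmooth hreg x
      have := hnn x
      rcases lt_or_gt_of_ne hkx with h | h
      · rcases hε with rfl | rfl
        · nlinarith
        · nlinarith
      · rcases hε with rfl | rfl
        · nlinarith
        · nlinarith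
    have := integral_pos_of_exists (g := fun t => ε * (signedCurv2 α t * rr α t))
      (continuous_const.mul (cont_integrand hsmooth hreg))
      (fun t => by
        have hr := rr_pos hsmooth hreg t
        have := hnn t
        nlinarith)
      (by norm_num : (0:ℝ) < 1) ⟨le_of_lt hxIoo.1, le_of_lt hxIoo.2⟩ hgx
    rwa [intervalIntegral.integral_const_mul] at this
  -- ε * I = 2π * (ε * nn)
  have hεI : ε * I = 2 * π * (ε * nn) := by
    rw [hI1, hnn1]; ring
  -- the natural number n
  have hεnnpos : 0 < ε * (nn : ℝ) := by
    by_contra hcon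
    push_neg at hcon
    nlinarith [pi_pos]
  -- express ε * nn as a natural number
  obtain ⟨n, hn, hnpos⟩ : ∃ n : ℕ, (n : ℝ) = ε * nn ∧ 1 ≤ n := by
    rcases hε with rfl | rfl
    · have : (0:ℝ) < nn := by linarith
      have hnn0 : 0 < nn := by exact_mod_cast this
      refine ⟨nn.toNat, ?_, by omega⟩
      have h5 : ((nn.toNat : ℤ) : ℝ) = ((nn : ℤ) : ℝ) :=
        congrArg _ (Int.toNat_of_nonneg (le_of_lt hnn0))
      push_cast at h5
      rw [one_mul]
      exact h5
    · have : (nn:ℝ) < 0 := by nlinarith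
      have hnn0 : nn < 0 := by exact_mod_cast this
      refine ⟨(-nn).toNat, ?_, by omega⟩
      have h5 : (((-nn).toNat : ℤ) : ℝ) = ((-nn : ℤ) : ℝ) :=
        congrArg _ (Int.toNat_of_nonneg (by omega : 0 ≤ -nn))
      push_cast at h5
      rw [h5]
      ring
  -- Θ 1 = Θ 0 + 2π n
  have hΘ1 : Θ 1 = Θ 0 + 2 * π * n := by
    simp only [hΘ]
    rw [hnn1, hn]
    ring
  -- counting
  have hcount : numLocalMax f = n :=
    cnt n hΘc hΘm hΘ1 (rr_pos hsmooth hreg) hfd'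
  have hmn : m = n := by rw [← hm, ← hcount]
  -- final computation
  have hintegrand : ∀ t, |signedCurv2 α t| * ‖deriv α t‖
      = ε * (signedCurv2 α t * rr α t) := by
    intro t
    have := hnn t
    rcases hε with rfl | rfl
    · rw [abs_of_nonneg (by linarith)]
      show _ = 1 * (signedCurv2 α t * rr α t)
      rw [one_mul]
      rfl
    · rw [abs_of_nonpos (by linarith)]
      show -signedCurv2 α t * ‖deriv α t‖ = -1 * (signedCurv2 α t * rr α t)
      rw [show (rr α t : ℝ) = ‖deriv α t‖ from rfl]
      ring
  calc ∫ t in (0:ℝ)..1, |signedCurv2 α t| * ‖deriv α t‖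
      = ∫ t in (0:ℝ)..1, ε * (signedCurv2 α t * rr α t) := by
        apply intervalIntegral.integral_congr
        intro t _
        exact hintegrand t
    _ = ε * I := by rw [hI, intervalIntegral.integral_const_mul]
    _ = 2 * π * (ε * nn) := hεI
    _ = 2 * Real.pi * m := by rw [← hn, hmn]

end
end

section
/- Let α be a C² immersed closed plane curve (periodic with period 1, α′ never 0) having only finitely many inflection points in one period, all of which are s-inflection points, and let t₀ be an s-inflection point with unit normal N₀. Then N₀ (and likewise −N₀) is a local extrema changing vector at t₀: there exists δ > 0 such that for every sufficiently small ε > 0, the number of local extrema of t ↦ ⟨α(t), R_ε N₀⟩ on (t₀ − δ, t₀ + δ) and the number of local extrema of t ↦ ⟨α(t), R_{−ε} N₀⟩ on (t₀ − δ, t₀ + δ) differ by exactly 2. -/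
open Real Set
open scoped RealInnerProductSpace

noncomputable section

/-- The number of local extrema of `t ↦ f t` in the open interval `(a, b)`. -/
def localExtremaCount (f : ℝ → ℝ) (a b : ℝ) : ℕ :=
  Set.ncard {t : ℝ | t ∈ Set.Ioo a b ∧ (IsLocalMax f t ∨ IsLocalMin f t)}

/-! ### Auxiliary lemmas -/

lemma inner2 (x y : E2) : ⟪x, y⟫ = x 0 * y 0 + x 1 * y 1 := by
  simp [PiLp.inner_apply, RCLike.inner_apply, Fin.sum_univ_two]
  ring

lemma hasDerivAt_coord {α : ℝ → E2} {t : ℝ} {d : E2} (h : HasDerivAt α d t) (i : Fin 2) :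
    HasDerivAt (fun s => α s i) (d i) t := by
  have := (EuclideanSpace.proj (𝕜 := ℝ) i).hasFDerivAt.comp_hasDerivAt t h
  simpa [Function.comp_def] using this

lemma periodic_deriv {F : Type*} [NormedAddCommGroup F] [NormedSpace ℝ F]
    {f : ℝ → F} (h : Function.Periodic f 1) : Function.Periodic (deriv f) 1 := by
  intro x
  have h1 : (fun y => f (y + 1)) = f := funext h
  calc deriv f (x + 1) = deriv (fun y => f (y + 1)) x := (deriv_comp_add_const f 1 x).symm
  _ = deriv f x := by rw [h1]

lemma same_sign {D : ℝ → ℝ} (hD : Continuous D) {c d : ℝ} (h0 : ∀ t ∈ Ioo c d, D t ≠ 0)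
    {s t : ℝ} (hs : s ∈ Ioo c d) (ht : t ∈ Ioo c d) : 0 < D s * D t := by
  rcases lt_trichotomy (D s * D t) 0 with h | h | h
  · exfalso
    have hsub : uIcc s t ⊆ Ioo c d := by
      intro x hx
      rw [Set.mem_uIcc] at hx
      rcases hx with ⟨h1, h2⟩ | ⟨h1, h2⟩
      · exact ⟨lt_of_lt_of_le hs.1 h1, lt_of_le_of_lt h2 ht.2⟩
      · exact ⟨lt_of_lt_of_le ht.1 h1, lt_of_le_of_lt h2 hs.2⟩
    have h0' : (0:ℝ) ∈ uIcc (D s) (D t) := by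
      rw [Set.mem_uIcc]
      rcases mul_neg_iff.mp h with ⟨h1, h2⟩ | ⟨h1, h2⟩
      · right; exact ⟨le_of_lt h2, le_of_lt h1⟩
      · left; exact ⟨le_of_lt h1, le_of_lt h2⟩
    obtain ⟨x, hx1, hx2⟩ := intermediate_value_uIcc (hD.continuousOn) h0'
    exact h0 x (hsub hx1) hx2
  · exfalso
    rcases mul_eq_zero.mp h with h' | h'
    · exact h0 s hs h'
    · exact h0 t ht h'
  · exact h

lemma countZero {a b : ℝ} {f : ℝ → ℝ} (h : ∀ t ∈ Ioo a b, deriv f t ≠ 0) :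
    localExtremaCount f a b = 0 := by
  unfold localExtremaCount
  convert Set.ncard_empty ℝ
  ext t
  simp only [mem_setOf_eq, mem_empty_iff_false, iff_false, not_and]
  intro ht hext
  rcases hext with hm | hm
  · exact h t ht hm.deriv_eq_zero
  · exact h t ht hm.deriv_eq_zero

lemma countNeg (f : ℝ → ℝ) (a b : ℝ) :
    localExtremaCount (fun t => -(f t)) a b = localExtremaCount f a b := by
  unfold localExtremaCount
  congr 1
  ext t
  simp only [mem_setOf_eq, and_congr_right_iff]
  intro _
  constructor
  · rintro (h | h)
    · exact Or.inr (by simpa using h.neg)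
    · exact Or.inl (by simpa using h.neg)
  · rintro (h | h)
    · exact Or.inr h.neg
    · exact Or.inl h.neg

lemma countTwo {a t₀ b c : ℝ} {f φ v : ℝ → ℝ}
    (hat : a < t₀) (htb : t₀ < b)
    (hf : ∀ t, DifferentiableAt ℝ f t)
    (hderiv : ∀ t ∈ Icc a b, deriv f t = v t * (φ t - c))
    (hv : ∀ t ∈ Icc a b, 0 < v t)
    (hφc : ContinuousOn φ (Icc a b))
    (hmono : StrictMonoOn φ (Icc a t₀))
    (hanti : StrictAntiOn φ (Icc t₀ b))
    (hφ0 : φ t₀ = 0)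
    (hc0 : c < 0) (hca : φ a < c) (hcb : φ b < c) :
    localExtremaCount f a b = 2 := by
  have hfc : Continuous f := continuous_iff_continuousAt.2 fun t => (hf t).continuousAt
  obtain ⟨t₁, ht₁mem, ht₁⟩ : ∃ t₁ ∈ Ioo a t₀, φ t₁ = c := by
    have := intermediate_value_Ioo (le_of_lt hat) (hφc.mono (Icc_subset_Icc le_rfl (le_of_lt htb)))
    have hc : c ∈ Ioo (φ a) (φ t₀) := by rw [hφ0]; exact ⟨hca, hc0⟩
    obtain ⟨t₁, h1, h2⟩ := this hc
    exact ⟨t₁, h1, h2⟩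
  obtain ⟨t₂, ht₂mem, ht₂⟩ : ∃ t₂ ∈ Ioo t₀ b, φ t₂ = c := by
    have := intermediate_value_Ioo' (le_of_lt htb) (hφc.mono (Icc_subset_Icc (le_of_lt hat) le_rfl))
    have hc : c ∈ Ioo (φ b) (φ t₀) := by rw [hφ0]; exact ⟨hcb, hc0⟩
    obtain ⟨t₂, h1, h2⟩ := this hc
    exact ⟨t₂, h1, h2⟩
  have ht₁t₂ : t₁ < t₂ := ht₁mem.2.trans ht₂mem.1
  have ht₁Icc : t₁ ∈ Icc a t₀ := ⟨le_of_lt ht₁mem.1, le_of_lt ht₁mem.2⟩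
  have ht₂Icc : t₂ ∈ Icc t₀ b := ⟨le_of_lt ht₂mem.1, le_of_lt ht₂mem.2⟩
  have hIcc₁ : ∀ t, a ≤ t → t ≤ t₁ → t ∈ Icc a b :=
    fun t h1 h2 => ⟨h1, le_trans h2 (le_of_lt (ht₁mem.2.trans htb))⟩
  have hIcc₂ : ∀ t, t₁ ≤ t → t ≤ t₂ → t ∈ Icc a b :=
    fun t h1 h2 => ⟨le_trans (le_of_lt ht₁mem.1) h1, le_trans h2 (le_of_lt ht₂mem.2)⟩
  have hIcc₃ : ∀ t, t₂ ≤ t → t ≤ b → t ∈ Icc a b :=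
    fun t h1 h2 => ⟨le_trans (le_of_lt (hat.trans ht₂mem.1)) h1, h2⟩
  have hlt₁ : ∀ t ∈ Ioo a t₁, φ t < c := by
    intro t ht
    have : φ t < φ t₁ := hmono ⟨le_of_lt ht.1, le_of_lt (ht.2.trans ht₁mem.2)⟩ ht₁Icc ht.2
    rwa [ht₁] at this
  have hgt : ∀ t ∈ Ioo t₁ t₂, c < φ t := by
    intro t ht
    rcases le_or_gt t t₀ with h | h
    · have : φ t₁ < φ t := hmono ht₁Icc ⟨le_trans (le_of_lt ht₁mem.1) (le_of_lt ht.1), h⟩ ht.1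
      rwa [ht₁] at this
    · have : φ t₂ < φ t :=
        hanti ⟨le_of_lt h, le_trans (le_of_lt ht.2) (le_of_lt ht₂mem.2)⟩ ht₂Icc ht.2
      rwa [ht₂] at this
  have hlt₂ : ∀ t ∈ Ioo t₂ b, φ t < c := by
    intro t ht
    have : φ t < φ t₂ := hanti ht₂Icc ⟨le_of_lt (ht₂mem.1.trans ht.1), le_of_lt ht.2⟩ ht.1
    rwa [ht₂] at this
  have hanti₁ : StrictAntiOn f (Icc a t₁) := by
    apply strictAntiOn_of_deriv_neg (convex_Icc _ _) (hfc.continuousOn)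
    intro t ht
    rw [interior_Icc] at ht
    have htab : t ∈ Icc a b := hIcc₁ t (le_of_lt ht.1) (le_of_lt ht.2)
    rw [hderiv t htab]
    have := hlt₁ t ht
    have hvt := hv t htab
    nlinarith
  have hmono₂ : StrictMonoOn f (Icc t₁ t₂) := by
    apply strictMonoOn_of_deriv_pos (convex_Icc _ _) (hfc.continuousOn)
    intro t ht
    rw [interior_Icc] at ht
    have htab : t ∈ Icc a b := hIcc₂ t (le_of_lt ht.1) (le_of_lt ht.2)
    rw [hderiv t htab]
    have := hgt t ht
    have hvt := hv t htab
    nlinarith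
  have hanti₃ : StrictAntiOn f (Icc t₂ b) := by
    apply strictAntiOn_of_deriv_neg (convex_Icc _ _) (hfc.continuousOn)
    intro t ht
    rw [interior_Icc] at ht
    have htab : t ∈ Icc a b := hIcc₃ t (le_of_lt ht.1) (le_of_lt ht.2)
    rw [hderiv t htab]
    have := hlt₂ t ht
    have hvt := hv t htab
    nlinarith
  have hmin : IsLocalMin f t₁ := by
    have hnb : Ioo a t₂ ∈ nhds t₁ := Ioo_mem_nhds ht₁mem.1 ht₁t₂
    filter_upwards [hnb] with t ht
    rcases le_or_gt t t₁ with h | h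
    · rcases eq_or_lt_of_le h with h' | h'
      · exact le_of_eq (by rw [h'])
      · exact le_of_lt (hanti₁ ⟨le_of_lt ht.1, h⟩ ⟨le_of_lt (ht.1.trans h'), le_rfl⟩ h')
    · exact le_of_lt (hmono₂ ⟨le_rfl, le_of_lt (h.trans_le (le_of_lt ht.2))⟩
        ⟨le_of_lt h, le_of_lt ht.2⟩ h)
  have hmax : IsLocalMax f t₂ := by
    have hnb : Ioo t₁ b ∈ nhds t₂ := Ioo_mem_nhds ht₁t₂ ht₂mem.2
    filter_upwards [hnb] with t ht
    rcases le_or_gt t t₂ with h | h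
    · rcases eq_or_lt_of_le h with h' | h'
      · exact le_of_eq (by rw [h'])
      · exact le_of_lt (hmono₂ ⟨le_of_lt ht.1, le_of_lt h'⟩ ⟨le_of_lt (ht.1.trans h'), le_rfl⟩ h')
    · exact le_of_lt (hanti₃ ⟨le_rfl, le_of_lt (h.trans (ht.2))⟩ ⟨le_of_lt h, le_of_lt ht.2⟩ h)
  have hset : {t : ℝ | t ∈ Set.Ioo a b ∧ (IsLocalMax f t ∨ IsLocalMin f t)} = {t₁, t₂} := by
    ext t
    simp only [mem_setOf_eq, mem_insert_iff, mem_singleton_iff]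
    constructor
    · rintro ⟨ht, hext⟩
      have hd0 : deriv f t = 0 := by
        rcases hext with h | h
        · exact h.deriv_eq_zero
        · exact h.deriv_eq_zero
      have htab : t ∈ Icc a b := ⟨le_of_lt ht.1, le_of_lt ht.2⟩
      rw [hderiv t htab] at hd0
      have hvt := hv t htab
      have hφt : φ t = c := by
        rcases mul_eq_zero.1 hd0 with h | h
        · exact absurd h (ne_of_gt hvt)
        · linarith [sub_eq_zero.1 h]
      rcases le_or_gt t t₀ with h | h
      · left
        exact hmono.injOn ⟨le_of_lt ht.1, h⟩ ht₁Icc (by rw [hφt, ht₁])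
      · right
        exact hanti.injOn ⟨le_of_lt h, le_of_lt ht.2⟩ ht₂Icc (by rw [hφt, ht₂])
    · rintro (rfl | rfl)
      · exact ⟨⟨ht₁mem.1, ht₁mem.2.trans htb⟩, Or.inr hmin⟩
      · exact ⟨⟨hat.trans ht₂mem.1, ht₂mem.2⟩, Or.inl hmax⟩
  unfold localExtremaCount
  rw [hset]
  exact Set.ncard_pair (ne_of_lt ht₁t₂)

lemma endgame {F : ℝ → ℝ → ℝ} {v φ : ℝ → ℝ} {σ a t₀ b : ℝ}
    (hσ : σ = 1 ∨ σ = -1) (hat : a < t₀) (htb : t₀ < b)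
    (hFdiff : ∀ e t, DifferentiableAt ℝ (F e) t)
    (hFderiv : ∀ e : ℝ, Real.cos e ≠ 0 →
      ∀ t ∈ Icc a b, deriv (F e) t = (v t * Real.cos e) * (φ t - σ * Real.tan e))
    (hv : ∀ t ∈ Icc a b, 0 < v t)
    (hφc : ContinuousOn φ (Icc a b))
    (hmono : StrictMonoOn φ (Icc a t₀))
    (hanti : StrictAntiOn φ (Icc t₀ b))
    (hφ0 : φ t₀ = 0) :
    ∃ ε₀ > (0:ℝ), ∀ ε : ℝ, 0 < ε → ε < ε₀ →
      ((localExtremaCount (F ε) a b : ℤ) - (localExtremaCount (F (-ε)) a b : ℤ) = 2 ∨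
       (localExtremaCount (F (-ε)) a b : ℤ) - (localExtremaCount (F ε) a b : ℤ) = 2) := by
  have hφa : φ a < 0 := by
    have := hmono (left_mem_Icc.2 (le_of_lt hat)) (right_mem_Icc.2 (le_of_lt hat)) hat
    rwa [hφ0] at this
  have hφb : φ b < 0 := by
    have := hanti (left_mem_Icc.2 (le_of_lt htb)) (right_mem_Icc.2 (le_of_lt htb)) htb
    rwa [hφ0] at this
  set m : ℝ := min (-φ a) (-φ b) with hm
  have hm0 : 0 < m := lt_min (by linarith) (by linarith)
  have hπ : (0:ℝ) < π := pi_pos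
  refine ⟨min (arctan m) (π/4), lt_min (by simpa using arctan_strictMono hm0) (by linarith), ?_⟩
  intro ε hε0 hεlt
  have hεπ4 : ε < π/4 := lt_of_lt_of_le hεlt (min_le_right _ _)
  have hεπ2 : ε < π/2 := by linarith
  have hcos : 0 < Real.cos ε := Real.cos_pos_of_mem_Ioo ⟨by linarith, hεπ2⟩
  have hcosn : 0 < Real.cos (-ε) := by rwa [Real.cos_neg]
  have htanpos : 0 < Real.tan ε := Real.tan_pos_of_pos_of_lt_pi_div_two hε0 hεπ2
  have htanm : Real.tan ε < m := by
    have hεa : ε < arctan m := lt_of_lt_of_le hεlt (min_le_left _ _)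
    have h1 : ε ∈ Ioo (-(π/2)) (π/2) := ⟨by linarith, hεπ2⟩
    have h2 := arctan_mem_Ioo m
    have := Real.strictMonoOn_tan h1 h2 hεa
    rwa [Real.tan_arctan] at this
  have hφle : ∀ t ∈ Icc a b, φ t ≤ 0 := by
    intro t ht
    rcases le_or_gt t t₀ with h | h
    · rcases eq_or_lt_of_le h with rfl | h'
      · exact le_of_eq hφ0
      · have := hmono ⟨ht.1, le_of_lt h'⟩ (right_mem_Icc.2 (le_of_lt hat)) h'
        rw [hφ0] at this; exact le_of_lt this
    · have := hanti (left_mem_Icc.2 (le_of_lt htb)) ⟨le_of_lt h, ht.2⟩ h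
      rw [hφ0] at this; exact le_of_lt this
  have hma : φ a ≤ -m := by have := min_le_left (-φ a) (-φ b); linarith
  have hmb : φ b ≤ -m := by have := min_le_right (-φ a) (-φ b); linarith
  have hzero : ∀ e : ℝ, Real.cos e ≠ 0 → 0 < σ * Real.tan e →
      localExtremaCount (F e) a b = 0 := by
    intro e hce hσt
    apply countZero
    intro t ht
    rw [hFderiv e hce t ⟨le_of_lt ht.1, le_of_lt ht.2⟩]
    have h1 := hφle t ⟨le_of_lt ht.1, le_of_lt ht.2⟩
    have h2 := hv t ⟨le_of_lt ht.1, le_of_lt ht.2⟩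
    have hcc : v t * Real.cos e ≠ 0 := by
      intro h; rcases mul_eq_zero.1 h with h | h
      · exact (ne_of_gt h2) h
      · exact hce h
    intro hcon
    rcases mul_eq_zero.1 hcon with h | h
    · exact hcc h
    · nlinarith [sub_eq_zero.1 h]
  have htwo : ∀ e : ℝ, 0 < Real.cos e → σ * Real.tan e < 0 → -m < σ * Real.tan e →
      localExtremaCount (F e) a b = 2 := by
    intro e hce h1 h2
    exact countTwo hat htb (hFdiff e) (hFderiv e (ne_of_gt hce))
      (fun t ht => mul_pos (hv t ht) hce)
      hφc hmono hanti hφ0 h1 (by linarith) (by linarith)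
  rcases hσ with rfl | rfl
  · right
    have hz := hzero ε (ne_of_gt hcos) (by simpa using htanpos)
    have ht2 := htwo (-ε) hcosn (by rw [Real.tan_neg]; simpa using htanpos)
      (by rw [Real.tan_neg]; simp only [one_mul]; linarith)
    rw [hz, ht2]
    norm_num
  · left
    have hz := hzero (-ε) (ne_of_gt hcosn)
      (by rw [Real.tan_neg]; simp only [neg_one_mul, neg_neg]; exact htanpos)
    have ht2 := htwo ε hcos (by simp only [neg_one_mul]; linarith)
      (by simp only [neg_one_mul]; linarith)
    rw [hz, ht2]
    norm_num

lemma endgame_neg {F : ℝ → ℝ → ℝ} {v φ : ℝ → ℝ} {σ a t₀ b : ℝ}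
    (hσ : σ = 1 ∨ σ = -1) (hat : a < t₀) (htb : t₀ < b)
    (hFdiff : ∀ e t, DifferentiableAt ℝ (F e) t)
    (hFderiv : ∀ e : ℝ, Real.cos e ≠ 0 →
      ∀ t ∈ Icc a b, deriv (F e) t = (v t * Real.cos e) * (φ t - σ * Real.tan e))
    (hv : ∀ t ∈ Icc a b, 0 < v t)
    (hφc : ContinuousOn φ (Icc a b))
    (hmono : StrictMonoOn (fun t => -(φ t)) (Icc a t₀))
    (hanti : StrictAntiOn (fun t => -(φ t)) (Icc t₀ b))
    (hφ0 : φ t₀ = 0) :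
    ∃ ε₀ > (0:ℝ), ∀ ε : ℝ, 0 < ε → ε < ε₀ →
      ((localExtremaCount (F ε) a b : ℤ) - (localExtremaCount (F (-ε)) a b : ℤ) = 2 ∨
       (localExtremaCount (F (-ε)) a b : ℤ) - (localExtremaCount (F ε) a b : ℤ) = 2) := by
  have hσ' : -σ = 1 ∨ -σ = -1 := by
    rcases hσ with rfl | rfl
    · right; norm_num
    · left; norm_num
  have hFdiff' : ∀ e t, DifferentiableAt ℝ (fun s => -(F e s)) t := fun e t => (hFdiff e t).neg
  have hFderiv' : ∀ e : ℝ, Real.cos e ≠ 0 → ∀ t ∈ Icc a b,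
      deriv (fun s => -(F e s)) t = (v t * Real.cos e) * ((-(φ t)) - (-σ) * Real.tan e) := by
    intro e hce t ht
    rw [deriv.fun_neg, hFderiv e hce t ht]
    ring
  obtain ⟨ε₀, hε₀, hmain⟩ := endgame (F := fun e s => -(F e s)) (v := v) (φ := fun t => -(φ t))
    (σ := -σ) hσ' hat htb hFdiff' hFderiv' hv hφc.neg hmono hanti (by simp [hφ0])
  refine ⟨ε₀, hε₀, ?_⟩
  intro ε h1 h2
  have := hmain ε h1 h2
  rwa [countNeg (F ε) a b, countNeg (F (-ε)) a b] at this

set_option maxHeartbeats 1000000 in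
/-- The unit normal (and its negative) at an s-inflection point is a local extrema
changing vector: nearby directions on the two sides of it see local extrema counts
near the inflection point differing by exactly `2`. -/
theorem normal_at_s_inflection_is_locally_extrema_changing (α : ℝ → E2)
    (hsmooth : ContDiff ℝ 2 α) (hper : Function.Periodic α 1)
    (hreg : ∀ t : ℝ, deriv α t ≠ 0)
    (hfin : (inflectionSet α).Finite)
    (hs : ∀ t : ℝ, signedCurv2 α t = 0 → SignChangeAt (signedCurv2 α) t)
    (t₀ : ℝ) (h₀ : signedCurv2 α t₀ = 0)
    (N₀ : E2) (hN₀ : N₀ = unitNormal α t₀ ∨ N₀ = -unitNormal α t₀) :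
    ∃ δ > (0:ℝ), ∃ ε₀ > (0:ℝ), ∀ ε : ℝ, 0 < ε → ε < ε₀ →
      ((localExtremaCount (fun s => ⟪α s, rot2 ε N₀⟫) (t₀ - δ) (t₀ + δ) : ℤ) -
          (localExtremaCount (fun s => ⟪α s, rot2 (-ε) N₀⟫) (t₀ - δ) (t₀ + δ) : ℤ) = 2 ∨
       (localExtremaCount (fun s => ⟪α s, rot2 (-ε) N₀⟫) (t₀ - δ) (t₀ + δ) : ℤ) -
          (localExtremaCount (fun s => ⟪α s, rot2 ε N₀⟫) (t₀ - δ) (t₀ + δ) : ℤ) = 2) := by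
  -- ## Smoothness data
  have h2 : ContDiff ℝ (1 + 1) α := by
    convert hsmooth using 2
    norm_num
  have hαd : Differentiable ℝ α := (contDiff_succ_iff_deriv.mp h2).1
  have hA1 : ContDiff ℝ 1 (deriv α) := (contDiff_succ_iff_deriv.mp h2).2.2
  have hAd : Differentiable ℝ (deriv α) := (contDiff_one_iff_deriv.mp hA1).1
  have hBc : Continuous (deriv (deriv α)) := (contDiff_one_iff_deriv.mp hA1).2
  have hAc : Continuous (deriv α) := hAd.continuous
  have hcoordA : ∀ (t : ℝ) (i : Fin 2), HasDerivAt (fun s => α s i) (deriv α t i) t :=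
    fun t i => hasDerivAt_coord (hαd t).hasDerivAt i
  have hcoordB : ∀ (t : ℝ) (i : Fin 2), HasDerivAt (fun s => deriv α s i) (deriv (deriv α) t i) t :=
    fun t i => hasDerivAt_coord (hAd t).hasDerivAt i
  have hAci : ∀ i : Fin 2, Continuous fun t => deriv α t i :=
    fun i => Differentiable.continuous (fun t => (hcoordB t i).differentiableAt)
  have hBci : ∀ i : Fin 2, Continuous fun t => deriv (deriv α) t i := by
    intro i
    have := ((EuclideanSpace.proj (𝕜 := ℝ) (i : Fin 2)).continuous).comp hBc
    simpa [Function.comp_def] using this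
  have hdA : ∀ (t : ℝ) (i : Fin 2), deriv (fun s => α s i) t = deriv α t i :=
    fun t i => (hcoordA t i).deriv
  have hdB : ∀ (t : ℝ) (i : Fin 2), deriv (deriv (fun s => α s i)) t = deriv (deriv α) t i := by
    intro t i
    have h1 : deriv (fun s => α s i) = fun s => deriv α s i := funext fun s => hdA s i
    rw [h1]
    exact (hcoordB t i).deriv
  -- ## the determinant D and its relation to curvature
  set D : ℝ → ℝ := fun t =>
    deriv α t 0 * deriv (deriv α) t 1 - deriv α t 1 * deriv (deriv α) t 0 with hDdef
  have hDc : Continuous D := ((hAci 0).mul (hBci 1)).sub ((hAci 1).mul (hBci 0))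
  have hnrm : ∀ t, (0:ℝ) < ‖deriv α t‖ := fun t => norm_pos_iff.mpr (hreg t)
  have hκeq : ∀ t, signedCurv2 α t = D t / ‖deriv α t‖ ^ 3 := by
    intro t
    unfold signedCurv2
    rw [hdA t 0, hdA t 1, hdB t 0, hdB t 1, hDdef]
  have hκiff : ∀ t, signedCurv2 α t = 0 ↔ D t = 0 := by
    intro t
    rw [hκeq t, div_eq_zero_iff]
    constructor
    · rintro (h | h)
      · exact h
      · exact absurd h (by have := hnrm t; positivity)
    · exact Or.inl
  have hD₀ : D t₀ = 0 := (hκiff t₀).mp h₀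
  -- ## periodicity of the signed curvature
  have hκper : Function.Periodic (signedCurv2 α) 1 := by
    have hci : ∀ i : Fin 2, Function.Periodic (fun s => α s i) 1 := by
      intro i s
      simp only
      rw [hper s]
    have hAper : Function.Periodic (deriv α) 1 := periodic_deriv hper
    have hciper : ∀ i : Fin 2, Function.Periodic (deriv (fun s => α s i)) 1 :=
      fun i => periodic_deriv (hci i)
    have hcip2 : ∀ i : Fin 2, Function.Periodic (deriv (deriv (fun s => α s i))) 1 :=
      fun i => periodic_deriv (hciper i)
    intro t
    unfold signedCurv2
    rw [hciper 0 t, hciper 1 t, hcip2 0 t, hcip2 1 t, hAper t]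
  -- ## finiteness: a ball around t₀ with no other zero of D
  have hSfin : ({z : ℝ | z ∈ Icc (t₀ - 1) (t₀ + 1) ∧ D z = 0 ∧ z ≠ t₀}).Finite := by
    have hU : (⋃ n ∈ Finset.Icc (⌊t₀⌋ - 1) (⌊t₀⌋ + 1),
        (fun s => s + (n : ℝ)) '' inflectionSet α).Finite :=
      Set.Finite.biUnion (Finset.Icc _ _).finite_toSet (fun n _ => hfin.image _)
    refine hU.subset ?_
    rintro z ⟨hz1, hz2, hz3⟩
    have hκz : signedCurv2 α z = 0 := (hκiff z).mpr hz2
    have hfr : signedCurv2 α (Int.fract z) = 0 := by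
      have hh := Function.Periodic.sub_int_mul_eq hκper (x := z) ⌊z⌋
      rw [mul_one] at hh
      have : Int.fract z = z - ⌊z⌋ := rfl
      rw [this, hh]
      exact hκz
    simp only [Set.mem_iUnion, Finset.mem_Icc]
    refine ⟨⌊z⌋, ⟨?_, ?_⟩, Int.fract z,
      ⟨⟨Int.fract_nonneg z, Int.fract_lt_one z⟩, hfr⟩, Int.fract_add_floor z⟩
    · have h1 : ((⌊t₀⌋ - 1 : ℤ) : ℝ) ≤ z := by
        push_cast
        have := Int.floor_le t₀
        linarith [hz1.1]
      exact Int.le_floor.mpr h1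
    · have h3 : ⌊t₀ + 1⌋ = ⌊t₀⌋ + 1 := by
        rw [show (1:ℝ) = ((1:ℤ):ℝ) by norm_num, Int.floor_add_intCast]
      have := Int.floor_le_floor hz1.2
      omega
  have ht₀S : t₀ ∉ {z : ℝ | z ∈ Icc (t₀ - 1) (t₀ + 1) ∧ D z = 0 ∧ z ≠ t₀} :=
    fun h => h.2.2 rfl
  obtain ⟨δ₁, hδ₁0, hδ₁⟩ : ∃ δ₁ > (0:ℝ), Metric.ball t₀ δ₁ ⊆
      {z : ℝ | z ∈ Icc (t₀ - 1) (t₀ + 1) ∧ D z = 0 ∧ z ≠ t₀}ᶜ := by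
    have hop : IsOpen ({z : ℝ | z ∈ Icc (t₀ - 1) (t₀ + 1) ∧ D z = 0 ∧ z ≠ t₀}ᶜ) :=
      hSfin.isClosed.isOpen_compl
    exact (Metric.isOpen_iff.mp hop) t₀ ht₀S
  -- ## the normal vector components
  obtain ⟨σ, hσ, hn0, hn1⟩ : ∃ σ : ℝ, (σ = 1 ∨ σ = -1) ∧
      N₀ 0 = σ * (-(‖deriv α t₀‖⁻¹ * deriv α t₀ 1)) ∧
      N₀ 1 = σ * (‖deriv α t₀‖⁻¹ * deriv α t₀ 0) := by
    rcases hN₀ with rfl | rfl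
    · refine ⟨1, Or.inl rfl, ?_, ?_⟩
      · show rot2 (Real.pi/2) (‖deriv α t₀‖⁻¹ • deriv α t₀) 0 = _
        simp [rot2, PiLp.smul_apply, smul_eq_mul]
      · show rot2 (Real.pi/2) (‖deriv α t₀‖⁻¹ • deriv α t₀) 1 = _
        simp [rot2, PiLp.smul_apply, smul_eq_mul]
    · refine ⟨-1, Or.inr rfl, ?_, ?_⟩
      · show (-(rot2 (Real.pi/2) (‖deriv α t₀‖⁻¹ • deriv α t₀))) 0 = _
        simp [rot2, PiLp.neg_apply, PiLp.smul_apply, smul_eq_mul]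
      · show (-(rot2 (Real.pi/2) (‖deriv α t₀‖⁻¹ • deriv α t₀))) 1 = _
        simp [rot2, PiLp.neg_apply, PiLp.smul_apply, smul_eq_mul]
  have hr : (0:ℝ) < ‖deriv α t₀‖ := hnrm t₀
  have hr2 : deriv α t₀ 0 ^ 2 + deriv α t₀ 1 ^ 2 = ‖deriv α t₀‖ ^ 2 := by
    rw [← real_inner_self_eq_norm_sq, inner2]; ring
  -- ## the auxiliary functions u, v, φ
  set u : ℝ → ℝ := fun t => deriv α t 0 * N₀ 0 + deriv α t 1 * N₀ 1 with hudef
  set v : ℝ → ℝ := fun t => ‖deriv α t₀‖⁻¹ *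
    (deriv α t 0 * deriv α t₀ 0 + deriv α t 1 * deriv α t₀ 1) with hvdef
  have huc : Continuous u := ((hAci 0).mul continuous_const).add ((hAci 1).mul continuous_const)
  have hvc : Continuous v := continuous_const.mul
    (((hAci 0).mul continuous_const).add ((hAci 1).mul continuous_const))
  have hu0 : u t₀ = 0 := by
    simp only [hudef]
    rw [hn0, hn1]
    ring
  have hv0 : v t₀ = ‖deriv α t₀‖ := by
    simp only [hvdef]
    have h : deriv α t₀ 0 * deriv α t₀ 0 + deriv α t₀ 1 * deriv α t₀ 1 = ‖deriv α t₀‖ ^ 2 := by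
      rw [← hr2]; ring
    rw [h, sq]
    field_simp
  obtain ⟨δ₂, hδ₂0, hδ₂⟩ : ∃ δ₂ > (0:ℝ), ∀ y : ℝ, dist y t₀ < δ₂ → 0 < v y := by
    have h := hvc.continuousAt (x := t₀)
    have h2 : ∀ᶠ y in nhds t₀, 0 < v y :=
      h.eventually (eventually_gt_nhds (by rw [hv0]; exact hr))
    exact Metric.eventually_nhds_iff.mp h2
  -- ## choice of δ
  set δ : ℝ := min (min δ₁ δ₂) 1 / 2 with hδdef
  have hδ0 : 0 < δ := by
    have : (0:ℝ) < min (min δ₁ δ₂) 1 := lt_min (lt_min hδ₁0 hδ₂0) one_pos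
    positivity
  have hδδ₁ : δ < δ₁ := by
    have h1 : min (min δ₁ δ₂) 1 ≤ δ₁ := le_trans (min_le_left _ _) (min_le_left _ _)
    rw [hδdef]; linarith
  have hδδ₂ : δ < δ₂ := by
    have h1 : min (min δ₁ δ₂) 1 ≤ δ₂ := le_trans (min_le_left _ _) (min_le_right _ _)
    rw [hδdef]; linarith
  have hδ1 : δ < 1 := by
    have h1 : min (min δ₁ δ₂) 1 ≤ 1 := min_le_right _ _
    rw [hδdef]; linarith
  refine ⟨δ, hδ0, ?_⟩
  have hat : t₀ - δ < t₀ := by linarith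
  have htb : t₀ < t₀ + δ := by linarith
  have hmemd : ∀ t ∈ Icc (t₀ - δ) (t₀ + δ), dist t t₀ ≤ δ := by
    intro t ht
    rw [Real.dist_eq, abs_le]
    exact ⟨by linarith [ht.1], by linarith [ht.2]⟩
  have hvpos : ∀ t ∈ Icc (t₀ - δ) (t₀ + δ), 0 < v t :=
    fun t ht => hδ₂ t (lt_of_le_of_lt (hmemd t ht) hδδ₂)
  have hDne : ∀ t ∈ Icc (t₀ - δ) (t₀ + δ), t ≠ t₀ → D t ≠ 0 := by
    intro t ht htne hD
    have h1 : t ∈ Metric.ball t₀ δ₁ := by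
      rw [Metric.mem_ball]
      exact lt_of_le_of_lt (hmemd t ht) hδδ₁
    exact hδ₁ h1 ⟨⟨by linarith [ht.1], by linarith [ht.2]⟩, hD, htne⟩
  -- ## derivatives of u, v and the quotient φ
  have hud : ∀ t : ℝ, HasDerivAt u
      (deriv (deriv α) t 0 * N₀ 0 + deriv (deriv α) t 1 * N₀ 1) t :=
    fun t => ((hcoordB t 0).mul_const _).add ((hcoordB t 1).mul_const _)
  have hvd : ∀ t : ℝ, HasDerivAt v (‖deriv α t₀‖⁻¹ *
      (deriv (deriv α) t 0 * deriv α t₀ 0 + deriv (deriv α) t 1 * deriv α t₀ 1)) t :=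
    fun t => (((hcoordB t 0).mul_const _).add ((hcoordB t 1).mul_const _)).const_mul _
  set φ : ℝ → ℝ := fun t => u t / v t with hφdef
  have hkey : ∀ t : ℝ, (deriv (deriv α) t 0 * N₀ 0 + deriv (deriv α) t 1 * N₀ 1) * v t -
      u t * (‖deriv α t₀‖⁻¹ *
        (deriv (deriv α) t 0 * deriv α t₀ 0 + deriv (deriv α) t 1 * deriv α t₀ 1)) =
      σ * D t := by
    intro t
    have hrr : ‖deriv α t₀‖⁻¹ * ‖deriv α t₀‖⁻¹ *
        (deriv α t₀ 0 ^ 2 + deriv α t₀ 1 ^ 2) = 1 := by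
      rw [hr2, sq]
      field_simp
    calc (deriv (deriv α) t 0 * N₀ 0 + deriv (deriv α) t 1 * N₀ 1) * v t -
        u t * (‖deriv α t₀‖⁻¹ *
          (deriv (deriv α) t 0 * deriv α t₀ 0 + deriv (deriv α) t 1 * deriv α t₀ 1))
        = σ * D t * (‖deriv α t₀‖⁻¹ * ‖deriv α t₀‖⁻¹ *
            (deriv α t₀ 0 ^ 2 + deriv α t₀ 1 ^ 2)) := by
          simp only [hudef, hvdef, hDdef]
          rw [hn0, hn1]
          ring
      _ = σ * D t := by rw [hrr, mul_one]
  have hφd : ∀ t ∈ Icc (t₀ - δ) (t₀ + δ), HasDerivAt φ (σ * D t / v t ^ 2) t := by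
    intro t ht
    have h := (hud t).div (hvd t) (ne_of_gt (hvpos t ht))
    rw [hkey t] at h
    exact h
  have hφderiv : ∀ t ∈ Icc (t₀ - δ) (t₀ + δ), deriv φ t = σ * D t / v t ^ 2 :=
    fun t ht => (hφd t ht).deriv
  have hφcont : ContinuousOn φ (Icc (t₀ - δ) (t₀ + δ)) :=
    ContinuousOn.div huc.continuousOn hvc.continuousOn (fun t ht => ne_of_gt (hvpos t ht))
  have hφ0 : φ t₀ = 0 := by
    simp only [hφdef]
    rw [hu0, zero_div]
  -- ## derivative of the height functions
  have hFhas : ∀ (e t : ℝ), HasDerivAt (fun s => ⟪α s, rot2 e N₀⟫)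
      (Real.cos e * u t - σ * Real.sin e * v t) t := by
    intro e t
    have h := HasDerivAt.inner ℝ (hαd t).hasDerivAt (hasDerivAt_const t (rot2 e N₀))
    have hval : ⟪α t, (0:E2)⟫ + ⟪deriv α t, rot2 e N₀⟫ =
        Real.cos e * u t - σ * Real.sin e * v t := by
      rw [inner_zero_right, zero_add, inner2]
      have h0 : rot2 e N₀ 0 = Real.cos e * N₀ 0 - Real.sin e * N₀ 1 := rfl
      have h1 : rot2 e N₀ 1 = Real.sin e * N₀ 0 + Real.cos e * N₀ 1 := rfl
      rw [h0, h1, hn0, hn1]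
      simp only [hudef, hvdef]
      rw [hn0, hn1]
      ring
    rw [← hval]
    exact h
  have hFdiff : ∀ (e t : ℝ), DifferentiableAt ℝ (fun s => ⟪α s, rot2 e N₀⟫) t :=
    fun e t => (hFhas e t).differentiableAt
  have hFderiv : ∀ e : ℝ, Real.cos e ≠ 0 → ∀ t ∈ Icc (t₀ - δ) (t₀ + δ),
      deriv (fun s => ⟪α s, rot2 e N₀⟫) t =
        (v t * Real.cos e) * (φ t - σ * Real.tan e) := by
    intro e hce t ht
    rw [(hFhas e t).deriv]
    have hvne := ne_of_gt (hvpos t ht)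
    simp only [hφdef]
    rw [Real.tan_eq_sin_div_cos]
    field_simp
  -- ## sign of D on each side of t₀
  have hLne : ∀ t ∈ Ioo (t₀ - δ) t₀, D t ≠ 0 :=
    fun t ht => hDne t ⟨le_of_lt ht.1, by linarith [ht.2]⟩ (ne_of_lt ht.2)
  have hRne : ∀ t ∈ Ioo t₀ (t₀ + δ), D t ≠ 0 :=
    fun t ht => hDne t ⟨by linarith [ht.1], le_of_lt ht.2⟩ (ne_of_gt ht.1)
  have hpL : t₀ - δ/2 ∈ Ioo (t₀ - δ) t₀ := ⟨by linarith, by linarith⟩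
  have hpR : t₀ + δ/2 ∈ Ioo t₀ (t₀ + δ) := ⟨by linarith, by linarith⟩
  have hLsign : (∀ t ∈ Ioo (t₀ - δ) t₀, 0 < D t) ∨ (∀ t ∈ Ioo (t₀ - δ) t₀, D t < 0) := by
    rcases lt_or_gt_of_ne (hLne _ hpL) with h | h
    · right; intro t ht
      rcases mul_pos_iff.mp (same_sign hDc hLne ht hpL) with ⟨h1, h2⟩ | ⟨h1, h2⟩
      · linarith
      · exact h1
    · left; intro t ht
      rcases mul_pos_iff.mp (same_sign hDc hLne ht hpL) with ⟨h1, h2⟩ | ⟨h1, h2⟩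
      · exact h1
      · linarith
  have hRsign : (∀ t ∈ Ioo t₀ (t₀ + δ), 0 < D t) ∨ (∀ t ∈ Ioo t₀ (t₀ + δ), D t < 0) := by
    rcases lt_or_gt_of_ne (hRne _ hpR) with h | h
    · right; intro t ht
      rcases mul_pos_iff.mp (same_sign hDc hRne ht hpR) with ⟨h1, h2⟩ | ⟨h1, h2⟩
      · linarith
      · exact h1
    · left; intro t ht
      rcases mul_pos_iff.mp (same_sign hDc hRne ht hpR) with ⟨h1, h2⟩ | ⟨h1, h2⟩
      · exact h1
      · linarith
  -- ## the curvature changes sign at t₀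
  obtain ⟨⟨p, hp1, hp2⟩, ⟨q, hq1, hq2⟩⟩ := hs t₀ h₀ δ hδ0
  have hpD : 0 < D p := by
    rw [hκeq p] at hp2
    rcases div_pos_iff.mp hp2 with ⟨h1, _⟩ | ⟨_, h2⟩
    · exact h1
    · exact absurd h2 (not_lt.mpr (le_of_lt (by have := hnrm p; positivity)))
  have hqD : D q < 0 := by
    rw [hκeq q] at hq2
    rcases div_neg_iff.mp hq2 with ⟨_, h2⟩ | ⟨h1, _⟩
    · exact absurd h2 (not_lt.mpr (le_of_lt (by have := hnrm q; positivity)))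
    · exact h1
  have hpne : p ≠ t₀ := fun h => by rw [h, hD₀] at hpD; exact lt_irrefl 0 hpD
  have hqne : q ≠ t₀ := fun h => by rw [h, hD₀] at hqD; exact lt_irrefl 0 hqD
  have hpside : p ∈ Ioo (t₀ - δ) t₀ ∨ p ∈ Ioo t₀ (t₀ + δ) := by
    obtain ⟨h1, h2⟩ := abs_lt.mp hp1
    rcases lt_or_gt_of_ne hpne with h | h
    · exact Or.inl ⟨by linarith, h⟩
    · exact Or.inr ⟨h, by linarith⟩
  have hqside : q ∈ Ioo (t₀ - δ) t₀ ∨ q ∈ Ioo t₀ (t₀ + δ) := by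
    obtain ⟨h1, h2⟩ := abs_lt.mp hq1
    rcases lt_or_gt_of_ne hqne with h | h
    · exact Or.inl ⟨by linarith, h⟩
    · exact Or.inr ⟨h, by linarith⟩
  have hKsign : ((∀ t ∈ Ioo (t₀ - δ) t₀, 0 < D t) ∧ (∀ t ∈ Ioo t₀ (t₀ + δ), D t < 0)) ∨
      ((∀ t ∈ Ioo (t₀ - δ) t₀, D t < 0) ∧ (∀ t ∈ Ioo t₀ (t₀ + δ), 0 < D t)) := by
    rcases hLsign with hL | hL <;> rcases hRsign with hR | hR
    · exfalso
      rcases hqside with h | h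
      · exact absurd (hL q h) (not_lt.mpr (le_of_lt hqD))
      · exact absurd (hR q h) (not_lt.mpr (le_of_lt hqD))
    · exact Or.inl ⟨hL, hR⟩
    · exact Or.inr ⟨hL, hR⟩
    · exfalso
      rcases hpside with h | h
      · exact absurd (hL p h) (not_lt.mpr (le_of_lt hpD))
      · exact absurd (hR p h) (not_lt.mpr (le_of_lt hpD))
  -- ## monotonicity of φ and conclusion
  have hsubL : Icc (t₀ - δ) t₀ ⊆ Icc (t₀ - δ) (t₀ + δ) :=
    Icc_subset_Icc le_rfl (by linarith)
  have hsubR : Icc t₀ (t₀ + δ) ⊆ Icc (t₀ - δ) (t₀ + δ) :=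
    Icc_subset_Icc (by linarith) le_rfl
  have hmemL : ∀ t ∈ Ioo (t₀ - δ) t₀, t ∈ Icc (t₀ - δ) (t₀ + δ) :=
    fun t ht => ⟨le_of_lt ht.1, by linarith [ht.2]⟩
  have hmemR : ∀ t ∈ Ioo t₀ (t₀ + δ), t ∈ Icc (t₀ - δ) (t₀ + δ) :=
    fun t ht => ⟨by linarith [ht.1], le_of_lt ht.2⟩
  rcases hKsign with ⟨hL, hR⟩ | ⟨hL, hR⟩ <;> rcases hσ with hσ1 | hσ1
  -- case 1 : D > 0 left, D < 0 right, σ = 1 : φ strictly increasing then decreasing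
  · have hmono : StrictMonoOn φ (Icc (t₀ - δ) t₀) := by
      apply strictMonoOn_of_deriv_pos (convex_Icc _ _) (hφcont.mono hsubL)
      intro t ht
      rw [interior_Icc] at ht
      rw [hφderiv t (hmemL t ht)]
      have h1 := hL t ht
      have h2 := hvpos t (hmemL t ht)
      rw [hσ1]
      have : (0:ℝ) < v t ^ 2 := by positivity
      apply div_pos _ this
      nlinarith
    have hanti : StrictAntiOn φ (Icc t₀ (t₀ + δ)) := by
      apply strictAntiOn_of_deriv_neg (convex_Icc _ _) (hφcont.mono hsubR)
      intro t ht
      rw [interior_Icc] at ht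
      rw [hφderiv t (hmemR t ht)]
      have h1 := hR t ht
      have h2 := hvpos t (hmemR t ht)
      rw [hσ1]
      have : (0:ℝ) < v t ^ 2 := by positivity
      apply div_neg_of_neg_of_pos _ this
      nlinarith
    exact endgame (F := fun e => fun s => ⟪α s, rot2 e N₀⟫) (Or.inl hσ1) hat htb hFdiff
      hFderiv hvpos hφcont hmono hanti hφ0
  -- case 2 : D > 0 left, D < 0 right, σ = -1 : -φ strictly increasing then decreasing
  · have hmono : StrictMonoOn (fun t => -(φ t)) (Icc (t₀ - δ) t₀) := by
      apply strictMonoOn_of_deriv_pos (convex_Icc _ _) ((hφcont.mono hsubL).neg)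
      intro t ht
      rw [interior_Icc] at ht
      rw [deriv.neg, hφderiv t (hmemL t ht)]
      have h1 := hL t ht
      have h2 := hvpos t (hmemL t ht)
      rw [hσ1]
      have : (0:ℝ) < v t ^ 2 := by positivity
      apply neg_pos.mpr
      apply div_neg_of_neg_of_pos _ this
      nlinarith
    have hanti : StrictAntiOn (fun t => -(φ t)) (Icc t₀ (t₀ + δ)) := by
      apply strictAntiOn_of_deriv_neg (convex_Icc _ _) ((hφcont.mono hsubR).neg)
      intro t ht
      rw [interior_Icc] at ht
      rw [deriv.neg, hφderiv t (hmemR t ht)]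
      have h1 := hR t ht
      have h2 := hvpos t (hmemR t ht)
      rw [hσ1]
      have : (0:ℝ) < v t ^ 2 := by positivity
      apply neg_neg_of_pos
      apply div_pos _ this
      nlinarith
    exact endgame_neg (F := fun e => fun s => ⟪α s, rot2 e N₀⟫) (Or.inr hσ1) hat htb hFdiff
      hFderiv hvpos hφcont hmono hanti hφ0
  -- case 3 : D < 0 left, D > 0 right, σ = 1 : -φ increasing then decreasing
  · have hmono : StrictMonoOn (fun t => -(φ t)) (Icc (t₀ - δ) t₀) := by
      apply strictMonoOn_of_deriv_pos (convex_Icc _ _) ((hφcont.mono hsubL).neg)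
      intro t ht
      rw [interior_Icc] at ht
      rw [deriv.neg, hφderiv t (hmemL t ht)]
      have h1 := hL t ht
      have h2 := hvpos t (hmemL t ht)
      rw [hσ1]
      have : (0:ℝ) < v t ^ 2 := by positivity
      apply neg_pos.mpr
      apply div_neg_of_neg_of_pos _ this
      nlinarith
    have hanti : StrictAntiOn (fun t => -(φ t)) (Icc t₀ (t₀ + δ)) := by
      apply strictAntiOn_of_deriv_neg (convex_Icc _ _) ((hφcont.mono hsubR).neg)
      intro t ht
      rw [interior_Icc] at ht
      rw [deriv.neg, hφderiv t (hmemR t ht)]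
      have h1 := hR t ht
      have h2 := hvpos t (hmemR t ht)
      rw [hσ1]
      have : (0:ℝ) < v t ^ 2 := by positivity
      apply neg_neg_of_pos
      apply div_pos _ this
      nlinarith
    exact endgame_neg (F := fun e => fun s => ⟪α s, rot2 e N₀⟫) (Or.inl hσ1) hat htb hFdiff
      hFderiv hvpos hφcont hmono hanti hφ0
  -- case 4 : D < 0 left, D > 0 right, σ = -1 : φ increasing then decreasing
  · have hmono : StrictMonoOn φ (Icc (t₀ - δ) t₀) := by
      apply strictMonoOn_of_deriv_pos (convex_Icc _ _) (hφcont.mono hsubL)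
      intro t ht
      rw [interior_Icc] at ht
      rw [hφderiv t (hmemL t ht)]
      have h1 := hL t ht
      have h2 := hvpos t (hmemL t ht)
      rw [hσ1]
      have : (0:ℝ) < v t ^ 2 := by positivity
      apply div_pos _ this
      nlinarith
    have hanti : StrictAntiOn φ (Icc t₀ (t₀ + δ)) := by
      apply strictAntiOn_of_deriv_neg (convex_Icc _ _) (hφcont.mono hsubR)
      intro t ht
      rw [interior_Icc] at ht
      rw [hφderiv t (hmemR t ht)]
      have h1 := hR t ht
      have h2 := hvpos t (hmemR t ht)
      rw [hσ1]
      have : (0:ℝ) < v t ^ 2 := by positivity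
      apply div_neg_of_neg_of_pos _ this
      nlinarith
    exact endgame (F := fun e => fun s => ⟪α s, rot2 e N₀⟫) (Or.inr hσ1) hat htb hFdiff
      hFderiv hvpos hφcont hmono hanti hφ0


end
end

section
/- Let α be a C² immersed closed plane curve (periodic with period 1, α′ never 0) having only finitely many inflection points in one period, all of which are s-inflection points, and such that μ̂(w, α) is finite for every unit vector w. Then the maximum over unit vectors w of μ̂(w, α) minus the minimum over unit vectors w of μ̂(w, α) is at most ν(α), the number of inflection points of α in one period. -/
open Real Set
open scoped RealInnerProductSpace

noncomputable section

section Helpers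
open Filter Topology

lemma slope_lemma_right (f g : ℝ → ℝ) (hf : HasDerivAt f (g x) x)
    (y : ℝ) (hxy : x < y) (hgx : 0 < g x) : ∃ z ∈ Ioo x y, f x < f z := by
  have h1 : Tendsto (slope f x) (𝓝[>] x) (𝓝 (g x)) :=
    ((hasDerivAt_iff_tendsto_slope.1 hf).mono_left
      (nhdsWithin_mono _ (by intro z hz; exact ne_of_gt hz)))
  have h2 : ∀ᶠ z in 𝓝[>] x, 0 < slope f x z := h1.eventually (eventually_gt_nhds hgx)
  have h3 : Ioo x y ∈ 𝓝[>] x := Ioo_mem_nhdsGT_of_mem ⟨le_refl x, hxy⟩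
  obtain ⟨z, hz1, hz2⟩ := (h2.and (eventually_of_mem h3 fun _ h => h)).exists
  refine ⟨z, hz2, ?_⟩
  have h4 : 0 < (f z - f x) / (z - x) := by simpa [slope_def_field] using hz1
  have hzx : 0 < z - x := sub_pos.2 hz2.1
  have h5 := mul_pos h4 hzx
  rw [div_mul_cancel₀ _ (ne_of_gt hzx)] at h5
  linarith

lemma slope_lemma_left (f g : ℝ → ℝ) (hf : HasDerivAt f (g y) y)
    (x : ℝ) (hxy : x < y) (hgy : g y < 0) : ∃ z ∈ Ioo x y, f y < f z := by
  have h1 : Tendsto (slope f y) (𝓝[<] y) (𝓝 (g y)) :=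
    ((hasDerivAt_iff_tendsto_slope.1 hf).mono_left
      (nhdsWithin_mono _ (by intro z hz; exact ne_of_lt hz)))
  have h2 : ∀ᶠ z in 𝓝[<] y, slope f y z < 0 := h1.eventually (eventually_lt_nhds hgy)
  have h3 : Ioo x y ∈ 𝓝[<] y := Ioo_mem_nhdsLT_of_mem ⟨hxy, le_refl y⟩
  obtain ⟨z, hz1, hz2⟩ := (h2.and (eventually_of_mem h3 fun _ h => h)).exists
  refine ⟨z, hz2, ?_⟩
  have h4 : (f z - f y) / (z - y) < 0 := by simpa [slope_def_field] using hz1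
  have hzy : z - y < 0 := sub_neg.2 hz2.2
  have h5 := mul_pos_of_neg_of_neg h4 hzy
  rw [div_mul_cancel₀ _ (ne_of_lt hzy)] at h5
  linarith

lemma exists_isLocalMax_of_deriv (f g : ℝ → ℝ) (hf : ∀ t, HasDerivAt f (g t) t)
    (x y : ℝ) (hxy : x < y) (hgx : 0 < g x) (hgy : g y < 0) :
    ∃ c ∈ Ioo x y, IsLocalMax f c := by
  have hcont : ContinuousOn f (Icc x y) :=
    fun t _ => ((hf t).continuousAt).continuousWithinAt
  obtain ⟨c, hc, hmax⟩ := isCompact_Icc.exists_isMaxOn (nonempty_Icc.2 hxy.le) hcont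
  obtain ⟨z1, hz1, hfz1⟩ := slope_lemma_right f g (hf x) y hxy hgx
  obtain ⟨z2, hz2, hfz2⟩ := slope_lemma_left f g (hf y) x hxy hgy
  have hcx : c ≠ x := by
    rintro rfl; exact absurd (hmax (Ioo_subset_Icc_self hz1)) (not_le.2 hfz1)
  have hcy : c ≠ y := by
    rintro rfl; exact absurd (hmax (Ioo_subset_Icc_self hz2)) (not_le.2 hfz2)
  have hcIoo : c ∈ Ioo x y := ⟨hc.1.lt_of_ne (Ne.symm hcx), hc.2.lt_of_ne hcy⟩
  exact ⟨c, hcIoo, hmax.isLocalMax (Icc_mem_nhds hcIoo.1 hcIoo.2)⟩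

lemma exists_isLocalMin_of_deriv (f g : ℝ → ℝ) (hf : ∀ t, HasDerivAt f (g t) t)
    (x y : ℝ) (hxy : x < y) (hgx : g x < 0) (hgy : 0 < g y) :
    ∃ c ∈ Ioo x y, IsLocalMin f c := by
  obtain ⟨c, hc, h⟩ := exists_isLocalMax_of_deriv (fun t => -f t) (fun t => -g t)
    (fun t => (hf t).neg) x y hxy (neg_pos.mpr hgx) (by simpa using hgy)
  exact ⟨c, hc, by simpa using h.neg⟩

/-- If `f' = g`, `g ≤ 0` left of `s` and `≥ 0` right of `s` on a neighbourhood interval,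
then `s` is a local min. -/
lemma isLocalMin_of_pattern (f g : ℝ → ℝ) (hf : ∀ t, HasDerivAt f (g t) t)
    (u u' s : ℝ) (hs : s ∈ Ioo u u')
    (hneg : ∀ x ∈ Ioo u u', x < s → g x ≤ 0)
    (hpos : ∀ x ∈ Ioo u u', s < x → 0 ≤ g x) :
    IsLocalMin f s := by
  have hderiv : ∀ t, deriv f t = g t := fun t => (hf t).deriv
  obtain ⟨δ, hδ, hsub⟩ : ∃ δ > 0, Icc (s - δ) (s + δ) ⊆ Ioo u u' := by
    refine ⟨min (s - u) (u' - s) / 2, ?_, ?_⟩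
    · have h1 := hs.1; have h2 := hs.2
      have : 0 < min (s - u) (u' - s) := lt_min (by linarith) (by linarith)
      linarith
    · intro x hx
      simp only [mem_Icc] at hx
      have h1 : min (s - u) (u' - s) ≤ s - u := min_le_left _ _
      have h2 : min (s - u) (u' - s) ≤ u' - s := min_le_right _ _
      have h3 : 0 < min (s - u) (u' - s) := lt_min (by linarith [hs.1]) (by linarith [hs.2])
      constructor <;> [linarith [hx.1]; linarith [hx.2]]
  have hanti : AntitoneOn f (Icc (s - δ) s) := by
    apply antitoneOn_of_deriv_nonpos (convex_Icc _ _)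
      (fun t _ => (hf t).continuousAt.continuousWithinAt)
      (fun t _ => (hf t).differentiableAt.differentiableWithinAt)
    intro x hx
    rw [interior_Icc] at hx
    rw [hderiv]
    exact hneg x (hsub ⟨hx.1.le, by linarith [hx.2, hδ]⟩) hx.2
  have hmono : MonotoneOn f (Icc s (s + δ)) := by
    apply monotoneOn_of_deriv_nonneg (convex_Icc _ _)
      (fun t _ => (hf t).continuousAt.continuousWithinAt)
      (fun t _ => (hf t).differentiableAt.differentiableWithinAt)
    intro x hx
    rw [interior_Icc] at hx
    rw [hderiv]
    exact hpos x (hsub ⟨by linarith [hx.1, hδ], hx.2.le⟩) hx.1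
  have : ∀ x ∈ Icc (s - δ) (s + δ), f s ≤ f x := by
    intro x hx
    rcases le_total x s with h | h
    · exact hanti ⟨hx.1, h⟩ ⟨by linarith, le_refl _⟩ h
    · exact hmono ⟨le_refl _, by linarith⟩ ⟨h, hx.2⟩ h
  exact IsMinOn.isLocalMin (fun x hx => this x hx) (Icc_mem_nhds (by linarith) (by linarith))

/-- Periodic shift of local min. -/
lemma IsLocalMin.sub_period {f : ℝ → ℝ} (hper : Function.Periodic f 1) {t : ℝ}
    (h : IsLocalMin f t) : IsLocalMin f (t - 1) := by
  have hmap : Filter.map (fun x => x + 1) (𝓝 (t - 1)) = 𝓝 t := by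
    simpa using (Homeomorph.addRight (1:ℝ)).map_nhds_eq (t - 1)
  unfold IsLocalMin IsMinFilter at *
  have hft : f t = f (t - 1) := by simpa using hper (t-1)
  rw [← hmap, eventually_map] at h
  rw [← hft]
  filter_upwards [h] with x hx
  calc f t ≤ f (x + 1) := hx
    _ = f x := hper x

lemma IsLocalMax.sub_period {f : ℝ → ℝ} (hper : Function.Periodic f 1) {t : ℝ}
    (h : IsLocalMax f t) : IsLocalMax f (t - 1) := by
  have := IsLocalMin.sub_period (f := fun x => - f x) (by intro x; simp [hper x]) h.neg
  simpa using this.neg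

/-- On an interval where `a > 0` vanishing at the ends, `b` nonzero at ends, and the
Wronskian `a b' - b a'` positive, the function `c₁ a + c₂ b` (`c₂ > 0`) changes sign
from negative to positive exactly once. -/
lemma core_sign (a b : ℝ → ℝ) (u u' : ℝ) (huu : u < u')
    (ha : Differentiable ℝ a) (hb : Differentiable ℝ b)
    (hapos : ∀ t ∈ Ioo u u', 0 < a t)
    (hau : a u = 0) (hau' : a u' = 0)
    (hbu : b u ≠ 0) (hbu' : b u' ≠ 0)
    (hD : ∀ t ∈ Ioo u u', 0 < a t * deriv b t - b t * deriv a t)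
    (c₁ c₂ : ℝ) (hc₂ : 0 < c₂) :
    ∃ s ∈ Ioo u u', (∀ x ∈ Ioo u u', x < s → c₁ * a x + c₂ * b x < 0) ∧
      (∀ x ∈ Ioo u u', s < x → 0 < c₁ * a x + c₂ * b x) := by
  set J := Ioo u u' with hJ
  set p : ℝ → ℝ := fun t => b t / a t with hp
  set q : ℝ → ℝ := fun t => c₁ + c₂ * p t with hq
  have hane : ∀ t ∈ J, a t ≠ 0 := fun t ht => ne_of_gt (hapos t ht)
  -- q is strictly monotone on J
  have hqmono : StrictMonoOn q J := by
    apply strictMonoOn_of_deriv_pos (convex_Ioo _ _)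
    · exact ContinuousOn.add continuousOn_const (ContinuousOn.mul continuousOn_const
        (ContinuousOn.div (hb.continuous.continuousOn) (ha.continuous.continuousOn) hane))
    · intro x hx
      rw [interior_Ioo] at hx
      have hx' : HasDerivAt q (c₂ * ((deriv b x * a x - b x * deriv a x) / (a x)^2)) x := by
        have hdiv : HasDerivAt p ((deriv b x * a x - b x * deriv a x) / (a x)^2) x :=
          ((hb x).hasDerivAt.div (ha x).hasDerivAt (hane x hx))
        exact (hdiv.const_mul c₂).const_add c₁
      rw [hx'.deriv]
      have h1 := hD x hx
      have h2 := hapos x hx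
      have : 0 < deriv b x * a x - b x * deriv a x := by linarith [hD x hx]
      positivity
  -- |p| blows up at the left end
  have hblowL : Tendsto (fun t => |p t|) (nhdsWithin u (Ioi u)) atTop := by
    have hb1 : Tendsto (fun t => |b t|) (nhdsWithin u (Ioi u)) (nhds |b u|) :=
      ((hb.continuous.abs.tendsto u).mono_left nhdsWithin_le_nhds)
    have ha0 : Tendsto (fun t => |a t|) (nhdsWithin u (Ioi u)) (nhdsWithin 0 (Ioi 0)) := by
      apply tendsto_nhdsWithin_of_tendsto_nhds_of_eventually_within
      · simpa [hau] using ((ha.continuous.abs.tendsto u).mono_left nhdsWithin_le_nhds)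
      · filter_upwards [Ioo_mem_nhdsGT_of_mem ⟨le_refl u, huu⟩] with t ht
        exact abs_pos.mpr (hane t ht)
    have hinv : Tendsto (fun t => (|a t|)⁻¹) (nhdsWithin u (Ioi u)) atTop :=
      tendsto_inv_nhdsGT_zero.comp ha0
    have := Filter.Tendsto.pos_mul_atTop (abs_pos.mpr hbu) hb1 hinv
    apply this.congr'
    filter_upwards [Ioo_mem_nhdsGT_of_mem ⟨le_refl u, huu⟩] with t ht
    simp [hp, div_eq_mul_inv, abs_mul, abs_inv]
  -- |p| blows up at the right end
  have hblowR : Tendsto (fun t => |p t|) (nhdsWithin u' (Iio u')) atTop := by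
    have hb1 : Tendsto (fun t => |b t|) (nhdsWithin u' (Iio u')) (nhds |b u'|) :=
      ((hb.continuous.abs.tendsto u').mono_left nhdsWithin_le_nhds)
    have ha0 : Tendsto (fun t => |a t|) (nhdsWithin u' (Iio u')) (nhdsWithin 0 (Ioi 0)) := by
      apply tendsto_nhdsWithin_of_tendsto_nhds_of_eventually_within
      · simpa [hau'] using ((ha.continuous.abs.tendsto u').mono_left nhdsWithin_le_nhds)
      · filter_upwards [Ioo_mem_nhdsLT_of_mem ⟨huu, le_refl u'⟩] with t ht
        exact abs_pos.mpr (hane t ht)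
    have hinv : Tendsto (fun t => (|a t|)⁻¹) (nhdsWithin u' (Iio u')) atTop :=
      tendsto_inv_nhdsGT_zero.comp ha0
    have := Filter.Tendsto.pos_mul_atTop (abs_pos.mpr hbu') hb1 hinv
    apply this.congr'
    filter_upwards [Ioo_mem_nhdsLT_of_mem ⟨huu, le_refl u'⟩] with t ht
    simp [hp, div_eq_mul_inv, abs_mul, abs_inv]
  -- from |q| large and monotone: q negative near u, positive near u'
  have hqabs : ∀ t, |q t| ≥ c₂ * |p t| - |c₁| := by
    intro t
    have : |c₂ * p t| - |c₁| ≤ |c₁ + c₂ * p t| := by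
      have := abs_add_le c₁ (c₂ * p t)
      have h2 := abs_sub_abs_le_abs_sub (c₂ * p t) (-c₁)
      simp only [abs_neg] at h2
      calc |c₂ * p t| - |c₁| ≤ |c₂ * p t - -c₁| := h2
        _ = |c₁ + c₂ * p t| := by ring_nf
    simpa [abs_mul, abs_of_pos hc₂] using this
  have claimA : ∀ z ∈ J, ∃ x ∈ J, x < z ∧ q x < 0 := by
    intro z hz
    have hev : ∀ᶠ t in nhdsWithin u (Ioi u), |q z| < |q t| := by
      have : ∀ᶠ t in nhdsWithin u (Ioi u), (|q z| + |c₁|) / c₂ < |p t| :=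
        hblowL.eventually (eventually_gt_atTop _)
      filter_upwards [this] with t ht
      have := hqabs t
      have h3 : |q z| + |c₁| < c₂ * |p t| := by
        rw [div_lt_iff₀ hc₂] at ht; linarith
      linarith
    obtain ⟨x, hx1, hx2⟩ := (hev.and (eventually_of_mem
      (Ioo_mem_nhdsGT_of_mem ⟨le_refl u, hz.1⟩) fun _ h => h)).exists
    have hxJ : x ∈ J := ⟨hx2.1, lt_trans hx2.2 hz.2⟩
    refine ⟨x, hxJ, hx2.2, ?_⟩
    by_contra hcon
    push_neg at hcon
    have hlt : q x < q z := hqmono hxJ hz hx2.2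
    have : |q x| = q x := abs_of_nonneg hcon
    have : q x ≤ |q z| := le_trans hlt.le (le_abs_self _)
    linarith [this, hx1, abs_of_nonneg hcon]
  have claimB : ∀ z ∈ J, ∃ x ∈ J, z < x ∧ 0 < q x := by
    intro z hz
    have hev : ∀ᶠ t in nhdsWithin u' (Iio u'), |q z| < |q t| := by
      have : ∀ᶠ t in nhdsWithin u' (Iio u'), (|q z| + |c₁|) / c₂ < |p t| :=
        hblowR.eventually (eventually_gt_atTop _)
      filter_upwards [this] with t ht
      have := hqabs t
      have h3 : |q z| + |c₁| < c₂ * |p t| := by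
        rw [div_lt_iff₀ hc₂] at ht; linarith
      linarith
    obtain ⟨x, hx1, hx2⟩ := (hev.and (eventually_of_mem
      (Ioo_mem_nhdsLT_of_mem ⟨hz.2, le_refl u'⟩) fun _ h => h)).exists
    have hxJ : x ∈ J := ⟨lt_trans hz.1 hx2.1, hx2.2⟩
    refine ⟨x, hxJ, hx2.1, ?_⟩
    by_contra hcon
    push_neg at hcon
    have hlt : q z < q x := hqmono hz hxJ hx2.1
    have : -q x ≤ |q z| := by
      have := neg_le_neg hlt.le
      calc -q x ≤ -q z := this
        _ ≤ |q z| := neg_le_abs _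
    linarith [hx1, abs_of_nonpos hcon]
  -- find the zero
  set z0 := (u + u') / 2 with hz0
  have hz0J : z0 ∈ J := ⟨by rw [hz0]; linarith, by rw [hz0]; linarith⟩
  obtain ⟨xm, hxmJ, hxmlt, hqm⟩ := claimA z0 hz0J
  obtain ⟨xp, hxpJ, hxpgt, hqp⟩ := claimB xm hxmJ
  have hqcont : ContinuousOn q (Icc xm xp) := by
    apply ContinuousOn.add continuousOn_const
    apply ContinuousOn.mul continuousOn_const
    apply ContinuousOn.div (hb.continuous.continuousOn) (ha.continuous.continuousOn)
    intro t ht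
    exact hane t ⟨lt_of_lt_of_le hxmJ.1 ht.1, lt_of_le_of_lt ht.2 hxpJ.2⟩
  have h0mem : (0:ℝ) ∈ Ioo (q xm) (q xp) := ⟨hqm, hqp⟩
  obtain ⟨s, hsIoo, hqs⟩ := intermediate_value_Ioo hxpgt.le hqcont h0mem
  have hsJ : s ∈ J := ⟨lt_trans hxmJ.1 hsIoo.1, lt_trans hsIoo.2 hxpJ.2⟩
  refine ⟨s, hsJ, ?_, ?_⟩
  · intro x hx hxs
    have hqx : q x < 0 := by
      have := hqmono hx hsJ hxs
      rw [hqs] at this; exact this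
    have hax := hapos x hx
    have : c₁ * a x + c₂ * b x = a x * q x := by
      have hmc : a x * (b x / a x) = b x := by field_simp [hane x hx]
      simp only [hq, hp]
      linear_combination (-c₂) * hmc
    rw [this]
    exact mul_neg_of_pos_of_neg hax hqx
  · intro x hx hxs
    have hqx : 0 < q x := by
      have := hqmono hsJ hx hxs
      rw [hqs] at this; exact this
    have hax := hapos x hx
    have : c₁ * a x + c₂ * b x = a x * q x := by
      have hmc : a x * (b x / a x) = b x := by field_simp [hane x hx]
      simp only [hq, hp]
      linear_combination (-c₂) * hmc
    rw [this]
    exact mul_pos hax hqx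

lemma sign_const_Ioo {u u' : ℝ} (W : ℝ → ℝ) (hW : ContinuousOn W (Ioo u u'))
    (hne : ∀ t ∈ Ioo u u', W t ≠ 0) :
    (∀ t ∈ Ioo u u', 0 < W t) ∨ (∀ t ∈ Ioo u u', W t < 0) := by
  by_contra h
  push_neg at h
  obtain ⟨⟨x, hx, hx0⟩, ⟨y, hy, hy0⟩⟩ := h
  have hxneg : W x < 0 := (le_of_not_gt (not_lt.2 hx0)).lt_of_ne (hne x hx)
  have hypos : 0 < W y := (le_of_not_gt (not_lt.2 hy0)).lt_of_ne' (hne y hy)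
  rcases lt_or_gt_of_ne (show x ≠ y by rintro rfl; exact absurd hypos (not_lt.2 hxneg.le)) with hlt | hgt
  · have hsub : Icc x y ⊆ Ioo u u' := Icc_subset_Ioo hx.1 hy.2
    obtain ⟨z, hz, hz0⟩ := intermediate_value_Ioo hlt.le (hW.mono hsub) ⟨hxneg, hypos⟩
    exact hne z (hsub (Ioo_subset_Icc_self hz)) hz0
  · have hsub : Icc y x ⊆ Ioo u u' := Icc_subset_Ioo hy.1 hx.2
    obtain ⟨z, hz, hz0⟩ := intermediate_value_Ioo' hgt.le (hW.mono hsub) ⟨hxneg, hypos⟩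
    exact hne z (hsub (Ioo_subset_Icc_self hz)) hz0

lemma strict_of_nonneg {u u' : ℝ} (A A' B B' : ℝ → ℝ) (hA : ∀ t, HasDerivAt A (A' t) t)
    (hWne : ∀ t ∈ Ioo u u', A t * B' t - B t * A' t ≠ 0)
    (hAnn : ∀ t ∈ Ioo u u', 0 ≤ A t) : ∀ t ∈ Ioo u u', 0 < A t := by
  intro t ht
  rcases (hAnn t ht).lt_or_eq with h | h
  · exact h
  · exfalso
    have hmin : IsLocalMin A t := by
      apply IsMinOn.isLocalMin (s := Ioo u u') _ (isOpen_Ioo.mem_nhds ht)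
      intro z hz
      simp only [mem_setOf_eq]
      rw [← h]; exact hAnn z hz
    have hder : A' t = 0 := by
      have := hmin.deriv_eq_zero
      rwa [(hA t).deriv] at this
    apply hWne t ht
    rw [← h, hder]
    ring

lemma core_to_extremum (a b a' b' G f₂ : ℝ → ℝ) (u u' : ℝ) (huu : u < u')
    (ha : ∀ t, HasDerivAt a (a' t) t) (hb : ∀ t, HasDerivAt b (b' t) t)
    (hf₂ : ∀ t, HasDerivAt f₂ (G t) t)
    (hapos : ∀ t ∈ Ioo u u', 0 < a t)
    (hau : a u = 0) (hau' : a u' = 0)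
    (hbu : b u ≠ 0) (hbu' : b u' ≠ 0)
    (hD : ∀ t ∈ Ioo u u', 0 < a t * b' t - b t * a' t)
    (d₁ d₂ : ℝ) (hd₂ : d₂ ≠ 0)
    (hG : ∀ t, G t = d₁ * a t + d₂ * b t) :
    ∃ s ∈ Ioo u u', IsLocalMax f₂ s ∨ IsLocalMin f₂ s := by
  have hadiff : Differentiable ℝ a := fun t => (ha t).differentiableAt
  have hbdiff : Differentiable ℝ b := fun t => (hb t).differentiableAt
  have hD' : ∀ t ∈ Ioo u u', 0 < a t * deriv b t - b t * deriv a t := by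
    intro t ht; rw [(ha t).deriv, (hb t).deriv]; exact hD t ht
  rcases hd₂.lt_or_gt with hneg | hpos
  · obtain ⟨s, hs, h1, h2⟩ := core_sign a b u u' huu hadiff hbdiff hapos hau hau' hbu hbu'
      hD' (-d₁) (-d₂) (by linarith)
    refine ⟨s, hs, Or.inl ?_⟩
    have hmin : IsLocalMin (fun t => -f₂ t) s := by
      apply isLocalMin_of_pattern _ (fun t => -G t) (fun t => (hf₂ t).neg) u u' s hs
      · intro x hx hxs
        have := h1 x hx hxs
        show -G x ≤ 0
        rw [hG]; linarith
      · intro x hx hxs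
        have := h2 x hx hxs
        show (0:ℝ) ≤ -G x
        rw [hG]; linarith
    simpa using hmin.neg
  · obtain ⟨s, hs, h1, h2⟩ := core_sign a b u u' huu hadiff hbdiff hapos hau hau' hbu hbu'
      hD' d₁ d₂ hpos
    refine ⟨s, hs, Or.inr ?_⟩
    apply isLocalMin_of_pattern f₂ G hf₂ u u' s hs
    · intro x hx hxs; rw [hG]; linarith [h1 x hx hxs]
    · intro x hx hxs; rw [hG]; linarith [h2 x hx hxs]

lemma interval_extremum_pos (A B A' B' G f₂ : ℝ → ℝ) (c₁ c₂ : ℝ) (u u' : ℝ) (huu : u < u')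
    (hA : ∀ t, HasDerivAt A (A' t) t) (hB : ∀ t, HasDerivAt B (B' t) t)
    (hf₂ : ∀ t, HasDerivAt f₂ (G t) t)
    (hA'c : Continuous A') (hB'c : Continuous B')
    (hG : ∀ t, G t = c₁ * A t + c₂ * B t) (hc₂ : c₂ ≠ 0)
    (hAu : A u = 0) (hAu' : A u' = 0) (hBu : B u ≠ 0) (hBu' : B u' ≠ 0)
    (hWne : ∀ t ∈ Ioo u u', A t * B' t - B t * A' t ≠ 0)
    (hAnn : ∀ t ∈ Ioo u u', 0 ≤ A t) :
    ∃ s ∈ Ioo u u', IsLocalMax f₂ s ∨ IsLocalMin f₂ s := by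
  have hApos := strict_of_nonneg A A' B B' hA hWne hAnn
  have hAc : Continuous A := Differentiable.continuous (fun t => (hA t).differentiableAt)
  have hBc : Continuous B := Differentiable.continuous (fun t => (hB t).differentiableAt)
  have hWcont : ContinuousOn (fun t => A t * B' t - B t * A' t) (Ioo u u') :=
    ((hAc.mul hB'c).sub (hBc.mul hA'c)).continuousOn
  rcases sign_const_Ioo _ hWcont hWne with hpos | hneg
  · exact core_to_extremum A B A' B' G f₂ u u' huu hA hB hf₂ hApos hAu hAu' hBu hBu'
      hpos c₁ c₂ hc₂ hG
  · apply core_to_extremum A (fun t => -B t) A' (fun t => -B' t) G f₂ u u' huu hA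
      (fun t => (hB t).neg) hf₂ hApos hAu hAu' (neg_ne_zero.2 hBu) (neg_ne_zero.2 hBu')
      ?_ c₁ (-c₂) (neg_ne_zero.2 hc₂) ?_
    · intro t ht
      have := hneg t ht
      have heq : A t * -B' t - -B t * A' t = -(A t * B' t - B t * A' t) := by ring
      rw [heq]; linarith
    · intro t; rw [hG]; ring

lemma interval_extremum (A B A' B' G f₂ : ℝ → ℝ) (c₁ c₂ : ℝ) (u u' : ℝ) (huu : u < u')
    (hA : ∀ t, HasDerivAt A (A' t) t) (hB : ∀ t, HasDerivAt B (B' t) t)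
    (hf₂ : ∀ t, HasDerivAt f₂ (G t) t)
    (hA'c : Continuous A') (hB'c : Continuous B')
    (hG : ∀ t, G t = c₁ * A t + c₂ * B t) (hc₂ : c₂ ≠ 0)
    (hAu : A u = 0) (hAu' : A u' = 0) (hBu : B u ≠ 0) (hBu' : B u' ≠ 0)
    (hWne : ∀ t ∈ Ioo u u', A t * B' t - B t * A' t ≠ 0)
    (hAsign : (∀ t ∈ Ioo u u', 0 ≤ A t) ∨ (∀ t ∈ Ioo u u', A t ≤ 0)) :
    ∃ s ∈ Ioo u u', IsLocalMax f₂ s ∨ IsLocalMin f₂ s := by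
  rcases hAsign with hnn | hnp
  · exact interval_extremum_pos A B A' B' G f₂ c₁ c₂ u u' huu hA hB hf₂ hA'c hB'c hG hc₂
      hAu hAu' hBu hBu' hWne hnn
  · apply interval_extremum_pos (fun t => -A t) (fun t => -B t) (fun t => -A' t)
      (fun t => -B' t) G f₂ (-c₁) (-c₂) u u' huu (fun t => (hA t).neg) (fun t => (hB t).neg)
      hf₂ hA'c.neg hB'c.neg ?_ (neg_ne_zero.2 hc₂) (by show -A u = 0; rw [hAu]; ring) (by show -A u' = 0; rw [hAu']; ring)
      (neg_ne_zero.2 hBu) (neg_ne_zero.2 hBu') ?_ ?_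
    · intro t; rw [hG]; ring
    · intro t ht hcon
      apply hWne t ht
      beta_reduce at hcon
      linear_combination hcon
    · intro t ht
      show (0:ℝ) ≤ -A t
      linarith [hnp t ht]


lemma extremaSet_neg (f : ℝ → ℝ) : extremaSet (fun t => -(f t)) = extremaSet f := by
  unfold extremaSet
  ext t
  simp only [Set.mem_setOf_eq]
  have h1 : IsLocalMax (fun t => -(f t)) t ↔ IsLocalMin f t := by
    constructor
    · intro h; simpa using h.neg
    · intro h; simpa using h.neg
  have h2 : IsLocalMin (fun t => -(f t)) t ↔ IsLocalMax f t := by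
    constructor
    · intro h; simpa using h.neg
    · intro h; simpa using h.neg
  rw [h1, h2]
  tauto

end Helpers

/-- For an immersed closed plane curve all of whose inflection points are
s-inflection points, the maximum of `μ̂(w, α)` over unit vectors `w` exceeds the
minimum by at most the number `ν(α)` of inflection points in one period; stated
equivalently: `μ̂(w₁, α) ≤ μ̂(w₂, α) + ν(α)` for all unit `w₁, w₂`. -/
theorem muHat_variation_le_inflections (α : ℝ → E2)
    (hsmooth : ContDiff ℝ 2 α) (hper : Function.Periodic α 1)
    (hreg : ∀ t : ℝ, deriv α t ≠ 0)
    (hfin : (inflectionSet α).Finite)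
    (hs : ∀ t : ℝ, signedCurv2 α t = 0 → SignChangeAt (signedCurv2 α) t)
    (hext : ∀ w : E2, ‖w‖ = 1 → (extremaSet (fun s => ⟪α s, w⟫)).Finite) :
    ∀ w₁ w₂ : E2, ‖w₁‖ = 1 → ‖w₂‖ = 1 →
      muHat α w₁ ≤ muHat α w₂ + (inflectionSet α).ncard := by
  intro w₁ w₂ hw₁ hw₂
  classical
  -- coordinate facts
  have hnormsq : ∀ x : E2, x 0 ^ 2 + x 1 ^ 2 = ‖x‖ ^ 2 := by
    intro x
    rw [EuclideanSpace.norm_eq, sq_sqrt (by positivity)]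
    simp [Fin.sum_univ_two, sq_abs]
  have hinner : ∀ x w : E2, ⟪x, w⟫ = x 0 * w 0 + x 1 * w 1 := by
    intro x w
    simp [PiLp.inner_apply, RCLike.inner_apply, Fin.sum_univ_two, mul_comm]
  have hw1sq : w₁ 0 ^ 2 + w₁ 1 ^ 2 = 1 := by rw [hnormsq, hw₁]; norm_num
  have hw2sq : w₂ 0 ^ 2 + w₂ 1 ^ 2 = 1 := by rw [hnormsq, hw₂]; norm_num
  -- derivative machinery
  obtain ⟨hαdiff, -, hv1⟩ :=
    contDiff_succ_iff_deriv.mp (show ContDiff ℝ (1 + 1) α from by rw [one_add_one_eq_two]; exact hsmooth)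
  have hvdiff : Differentiable ℝ (deriv α) := hv1.differentiable one_ne_zero
  have hv'cont : Continuous (deriv (deriv α)) := hv1.continuous_deriv le_rfl
  have hvcont : Continuous (deriv α) := hvdiff.continuous
  have hα : ∀ t, HasDerivAt α (deriv α t) t := fun t => (hαdiff t).hasDerivAt
  have hvper : ∀ t, deriv α (t + 1) = deriv α t := by
    intro t
    have heq : (fun x => α (x + 1)) = α := funext fun x => hper x
    conv_rhs => rw [← heq]
    rw [deriv_comp_add_const]
  have hv'per : ∀ t, deriv (deriv α) (t + 1) = deriv (deriv α) t := by
    intro t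
    have heq : (fun x => deriv α (x + 1)) = deriv α := funext fun x => hvper x
    conv_rhs => rw [← heq]
    rw [deriv_comp_add_const]
  have hvi : ∀ (t : ℝ) (i : Fin 2), HasDerivAt (fun s => α s i) (deriv α t i) t := by
    intro t i
    exact (EuclideanSpace.proj (𝕜 := ℝ) i).hasFDerivAt.comp_hasDerivAt t (hα t)
  have hv'i : ∀ (t : ℝ) (i : Fin 2),
      HasDerivAt (fun s => deriv α s i) (deriv (deriv α) t i) t := by
    intro t i
    exact
      (EuclideanSpace.proj (𝕜 := ℝ) i).hasFDerivAt.comp_hasDerivAt t (hvdiff t).hasDerivAt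
  have hvicont : ∀ i : Fin 2, Continuous (fun t => deriv α t i) := by
    intro i
    exact (EuclideanSpace.proj (𝕜 := ℝ) i).continuous.comp hvcont
  have hv'icont : ∀ i : Fin 2, Continuous (fun t => deriv (deriv α) t i) := by
    intro i
    exact (EuclideanSpace.proj (𝕜 := ℝ) i).continuous.comp hv'cont
  -- the numerator of the curvature
  set N : ℝ → ℝ :=
    fun t => deriv α t 0 * deriv (deriv α) t 1 - deriv α t 1 * deriv (deriv α) t 0 with hNdef
  have hκ : ∀ t, signedCurv2 α t = N t / ‖deriv α t‖ ^ 3 := by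
    intro t
    unfold signedCurv2
    have e0 : deriv (fun s => α s 0) = fun t' => deriv α t' 0 := funext fun t' => (hvi t' 0).deriv
    have e1 : deriv (fun s => α s 1) = fun t' => deriv α t' 1 := funext fun t' => (hvi t' 1).deriv
    rw [e0, e1, (hv'i t 0).deriv, (hv'i t 1).deriv]
  have hκzero : ∀ t, signedCurv2 α t = 0 ↔ N t = 0 := by
    intro t
    rw [hκ]
    have hne : ‖deriv α t‖ ^ 3 ≠ 0 := pow_ne_zero _ (norm_ne_zero_iff.2 (hreg t))
    rw [div_eq_zero_iff]
    simp [hne]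
  have hκper : ∀ t, signedCurv2 α (t + 1) = signedCurv2 α t := by
    intro t
    rw [hκ, hκ, hNdef]
    simp only [hvper, hv'per]
  -- A, B and their derivatives
  set A : ℝ → ℝ := fun t => deriv α t 0 * w₁ 0 + deriv α t 1 * w₁ 1 with hAdef
  set A' : ℝ → ℝ :=
    fun t => deriv (deriv α) t 0 * w₁ 0 + deriv (deriv α) t 1 * w₁ 1 with hA'def
  set B : ℝ → ℝ := fun t => -(deriv α t 0) * w₁ 1 + deriv α t 1 * w₁ 0 with hBdef
  set B' : ℝ → ℝ :=
    fun t => -(deriv (deriv α) t 0) * w₁ 1 + deriv (deriv α) t 1 * w₁ 0 with hB'def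
  have hA : ∀ t, HasDerivAt A (A' t) t :=
    fun t => ((hv'i t 0).mul_const _).add ((hv'i t 1).mul_const _)
  have hB : ∀ t, HasDerivAt B (B' t) t :=
    fun t => (((hv'i t 0).neg).mul_const _).add ((hv'i t 1).mul_const _)
  have hA'cont : Continuous A' := ((hv'icont 0).mul continuous_const).add
    ((hv'icont 1).mul continuous_const)
  have hB'cont : Continuous B' := (((hv'icont 0).neg).mul continuous_const).add
    ((hv'icont 1).mul continuous_const)
  have hABnorm : ∀ t, A t ^ 2 + B t ^ 2 = ‖deriv α t‖ ^ 2 := by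
    intro t
    rw [← hnormsq (deriv α t), hAdef, hBdef]
    linear_combination (deriv α t 0 ^ 2 + deriv α t 1 ^ 2) * hw1sq
  have hWN : ∀ t, A t * B' t - B t * A' t = N t := by
    intro t
    rw [hAdef, hBdef, hA'def, hB'def, hNdef]
    linear_combination (deriv α t 0 * deriv (deriv α) t 1
      - deriv α t 1 * deriv (deriv α) t 0) * hw1sq
  have hAper : ∀ t, A (t + 1) = A t := by intro t; rw [hAdef]; simp only [hvper]
  -- derivative of the height functions
  have hf₁ : ∀ t, HasDerivAt (fun s => ⟪α s, w₁⟫) (A t) t := by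
    intro t
    have h := HasDerivAt.inner ℝ (hα t) (hasDerivAt_const t w₁)
    simp only [inner_zero_right, zero_add] at h
    have h2 : (⟪deriv α t, w₁⟫ : ℝ) = A t := (hinner (deriv α t) w₁).trans (by simp only [hAdef])
    rw [h2] at h
    exact h
  set G : ℝ → ℝ := fun t => deriv α t 0 * w₂ 0 + deriv α t 1 * w₂ 1 with hGdef
  have hf₂ : ∀ t, HasDerivAt (fun s => ⟪α s, w₂⟫) (G t) t := by
    intro t
    have h := HasDerivAt.inner ℝ (hα t) (hasDerivAt_const t w₂)
    simp only [inner_zero_right, zero_add] at h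
    have h2 : (⟪deriv α t, w₂⟫ : ℝ) = G t := (hinner (deriv α t) w₂).trans (by simp only [hGdef])
    rw [h2] at h
    exact h
  have hf₁per : Function.Periodic (fun s => ⟪α s, w₁⟫) 1 := fun s => by
    show ⟪α (s + 1), w₁⟫ = ⟪α s, w₁⟫
    rw [hper s]
  have hf₂per : Function.Periodic (fun s => ⟪α s, w₂⟫) 1 := fun s => by
    show ⟪α (s + 1), w₂⟫ = ⟪α s, w₂⟫
    rw [hper s]
  -- decomposition of w₂ in the rotated frame
  set c₁ : ℝ := w₂ 0 * w₁ 0 + w₂ 1 * w₁ 1 with hc₁def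
  set c₂ : ℝ := -(w₂ 0) * w₁ 1 + w₂ 1 * w₁ 0 with hc₂def
  have hGAB : ∀ t, G t = c₁ * A t + c₂ * B t := by
    intro t
    rw [hGdef, hAdef, hBdef, hc₁def, hc₂def]
    linear_combination (- (deriv α t 0 * w₂ 0) - deriv α t 1 * w₂ 1) * hw1sq

  by_cases hc₂0 : c₂ = 0
  · -- w₂ is parallel to w₁
    have hc₂0' : -(w₂ 0) * w₁ 1 + w₂ 1 * w₁ 0 = 0 := by rw [← hc₂def]; exact hc₂0
    have hc₁sq : c₁ ^ 2 + c₂ ^ 2 = 1 := by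
      simp only [hc₁def, hc₂def]
      linear_combination (w₂ 0 ^ 2 + w₂ 1 ^ 2) * hw1sq + hw2sq
    have hfeq : ∀ s : ℝ, ⟪α s, w₂⟫ = c₁ * ⟪α s, w₁⟫ := by
      intro s
      rw [hinner, hinner]
      simp only [hc₁def]
      linear_combination (-(α s 0 * w₂ 0) - α s 1 * w₂ 1) * hw1sq
        + (-(α s 0) * w₁ 1 + α s 1 * w₁ 0) * hc₂0'
    have hc₁pm : c₁ = 1 ∨ c₁ = -1 := by
      have h : (c₁ - 1) * (c₁ + 1) = 0 := by linear_combination hc₁sq - c₂ * hc₂0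
      rcases mul_eq_zero.1 h with h | h
      · exact Or.inl (by linarith)
      · exact Or.inr (by linarith)
    rcases hc₁pm with hc₁1 | hc₁1
    · have hfun : (fun s => ⟪α s, w₂⟫) = (fun s => ⟪α s, w₁⟫) :=
        funext fun s => by rw [hfeq s, hc₁1, one_mul]
      have heq : muHat α w₂ = muHat α w₁ := by unfold muHat; rw [hfun]
      omega
    · have hfun : (fun s => ⟪α s, w₂⟫) = (fun s => -(⟪α s, w₁⟫)) :=
        funext fun s => by rw [hfeq s, hc₁1]; ring
      have heq : muHat α w₂ = muHat α w₁ := by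
        unfold muHat
        rw [hfun, extremaSet_neg]
      omega
  · -- genuine case
    have hS1fin := hext w₁ hw₁
    have hS2fin := hext w₂ hw₂
    set F : Finset ℝ := hS1fin.toFinset with hFdef
    have hmu1 : muHat α w₁ = F.card := Set.ncard_eq_toFinset_card _ hS1fin
    rcases F.eq_empty_or_nonempty with hFe | hFne
    · rw [hmu1, hFe]; simp
    · set t₀ := F.min' hFne with ht₀def
      have ht₀F : t₀ ∈ F := F.min'_mem hFne
      have hFmem : ∀ x ∈ F, x ∈ Set.Ico (0:ℝ) 1 ∧
          (IsLocalMax (fun s => ⟪α s, w₁⟫) x ∨ IsLocalMin (fun s => ⟪α s, w₁⟫) x) := by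
        intro x hx
        have h := hS1fin.mem_toFinset.1 hx
        simpa [extremaSet] using h
      have hAzero : ∀ x ∈ F, A x = 0 := by
        intro x hx
        rcases (hFmem x hx).2 with h | h
        · have h2 := h.deriv_eq_zero; rwa [(hf₁ x).deriv] at h2
        · have h2 := h.deriv_eq_zero; rwa [(hf₁ x).deriv] at h2
      set nxt : ℝ → ℝ := fun x =>
        if h : (F.filter (fun y => x < y)).Nonempty then (F.filter (fun y => x < y)).min' h
        else t₀ + 1 with hnxtdef
      have ht₀0 : 0 ≤ t₀ := (hFmem t₀ ht₀F).1.1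
      have ht₀1 : t₀ < 1 := (hFmem t₀ ht₀F).1.2
      have hnxt_gt : ∀ x ∈ F, x < nxt x := by
        intro x hx
        simp only [hnxtdef]
        split_ifs with h
        · exact (Finset.mem_filter.1 ((F.filter _).min'_mem h)).2
        · linarith [(hFmem x hx).1.2, ht₀0]
      have hnxt_le : ∀ x ∈ F, nxt x ≤ t₀ + 1 := by
        intro x hx
        simp only [hnxtdef]
        split_ifs with h
        · have hmem := (F.filter _).min'_mem h
          have h2 := (hFmem _ (Finset.mem_filter.1 hmem).1).1.2
          linarith
        · exact le_refl _
      have hnxt_min : ∀ x ∈ F, ∀ y ∈ F, x < y → nxt x ≤ y := by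
        intro x hx y hy hxy
        have hne : (F.filter (fun z => x < z)).Nonempty := ⟨y, Finset.mem_filter.2 ⟨hy, hxy⟩⟩
        simp only [hnxtdef]
        rw [dif_pos hne]
        exact Finset.min'_le _ _ (Finset.mem_filter.2 ⟨hy, hxy⟩)
      have hAnxt : ∀ x ∈ F, A (nxt x) = 0 := by
        intro x hx
        simp only [hnxtdef]
        split_ifs with h
        · exact hAzero _ (Finset.mem_filter.1 ((F.filter _).min'_mem h)).1
        · rw [hAper]; exact hAzero t₀ ht₀F
      set ρ : ℝ → ℝ := fun r => if r < 1 then r else r - 1 with hρdef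
      have hxmemF : ∀ x ∈ F, 0 ≤ x ∧ x < 1 ∧ t₀ ≤ x :=
        fun x hx => ⟨(hFmem x hx).1.1, (hFmem x hx).1.2, F.min'_le x hx⟩
      have hρIco : ∀ x ∈ F, ∀ r ∈ Ioo x (nxt x), ρ r ∈ Set.Ico (0:ℝ) 1 := by
        intro x hx r hr
        obtain ⟨hx0, hx1, -⟩ := hxmemF x hx
        have h2 := hnxt_le x hx
        simp only [hρdef]
        split_ifs with h
        · exact ⟨by linarith [hr.1], h⟩
        · exact ⟨by linarith [not_lt.1 h], by linarith [hr.2]⟩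
      have hρshift : ∀ (f : ℝ → ℝ), Function.Periodic f 1 → ∀ r,
          (IsLocalMax f r ∨ IsLocalMin f r) → (IsLocalMax f (ρ r) ∨ IsLocalMin f (ρ r)) := by
        intro f hf r h
        simp only [hρdef]
        split_ifs with h1
        · exact h
        · rcases h with h | h
          · exact Or.inl (IsLocalMax.sub_period hf h)
          · exact Or.inr (IsLocalMin.sub_period hf h)
      have hκρ : ∀ x ∈ F, ∀ r ∈ Ioo x (nxt x), signedCurv2 α (ρ r) = signedCurv2 α r := by
        intro x hx r hr
        simp only [hρdef]
        split_ifs with h1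
        · rfl
        · have h2 := hκper (r - 1)
          rw [sub_add_cancel] at h2
          exact h2.symm
      have hnoS1 : ∀ x ∈ F, ∀ r ∈ Ioo x (nxt x),
          ¬(IsLocalMax (fun s => ⟪α s, w₁⟫) r ∨ IsLocalMin (fun s => ⟪α s, w₁⟫) r) := by
        intro x hx r hr hcon
        have hmemS : ρ r ∈ extremaSet (fun s => ⟪α s, w₁⟫) :=
          ⟨hρIco x hx r hr, hρshift _ hf₁per r hcon⟩
        have hρF : ρ r ∈ F := hS1fin.mem_toFinset.2 hmemS
        obtain ⟨hx0, hx1, hxt₀⟩ := hxmemF x hx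
        by_cases h1 : r < 1
        · have hρr : ρ r = r := by simp only [hρdef]; rw [if_pos h1]
          have h3 := hnxt_min x hx (ρ r) hρF (by rw [hρr]; exact hr.1)
          rw [hρr] at h3
          linarith [hr.2]
        · have hρr : ρ r = r - 1 := by simp only [hρdef]; rw [if_neg h1]
          have hle := F.min'_le (ρ r) hρF
          have h4 := hnxt_le x hx
          linarith [hr.2, hρr.le, hρr.ge]
      have hAsign : ∀ x ∈ F,
          (∀ t ∈ Ioo x (nxt x), 0 ≤ A t) ∨ (∀ t ∈ Ioo x (nxt x), A t ≤ 0) := by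
        intro x hx
        by_contra hcon
        push_neg at hcon
        obtain ⟨⟨y1, hy1, hy1n⟩, ⟨y2, hy2, hy2n⟩⟩ := hcon
        rcases lt_or_gt_of_ne (show y1 ≠ y2 by rintro rfl; linarith) with hlt | hgt
        · obtain ⟨c, hc, hcext⟩ := exists_isLocalMin_of_deriv _ A hf₁ y1 y2 hlt hy1n hy2n
          exact hnoS1 x hx c ⟨lt_trans hy1.1 hc.1, lt_trans hc.2 hy2.2⟩ (Or.inr hcext)
        · obtain ⟨c, hc, hcext⟩ := exists_isLocalMax_of_deriv _ A hf₁ y2 y1 hgt hy2n hy1n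
          exact hnoS1 x hx c ⟨lt_trans hy2.1 hc.1, lt_trans hc.2 hy1.2⟩ (Or.inl hcext)
      have hBne : ∀ u : ℝ, A u = 0 → B u ≠ 0 := by
        intro u hAu hBu
        have h1 := hABnorm u
        rw [hAu, hBu] at h1
        have h2 : ‖deriv α u‖ = 0 := by nlinarith [norm_nonneg (deriv α u)]
        exact hreg u (norm_eq_zero.1 h2)
      have key : ∀ x : ℝ, ∃ z : ℝ, x ∈ F →
          z ∈ extremaSet (fun s => ⟪α s, w₂⟫) ∪ inflectionSet α ∧
            ∃ r ∈ Ioo x (nxt x), z = ρ r := by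
        intro x
        by_cases hx : x ∈ F
        swap
        · exact ⟨0, fun h => absurd h hx⟩
        by_cases hinfl : ∃ r ∈ Ioo x (nxt x), signedCurv2 α r = 0
        · obtain ⟨r, hr, hκr⟩ := hinfl
          refine ⟨ρ r, fun _ => ⟨Or.inr ⟨hρIco x hx r hr, ?_⟩, r, hr, rfl⟩⟩
          rw [hκρ x hx r hr]; exact hκr
        · push_neg at hinfl
          have hWne : ∀ t ∈ Ioo x (nxt x), A t * B' t - B t * A' t ≠ 0 := by
            intro t ht hcon
            exact hinfl t ht ((hκzero t).2 (by rw [← hWN t]; exact hcon))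
          obtain ⟨s, hsmem, hsext⟩ := interval_extremum A B A' B' G (fun s => ⟪α s, w₂⟫)
            c₁ c₂ x (nxt x) (hnxt_gt x hx) hA hB hf₂ hA'cont hB'cont hGAB hc₂0
            (hAzero x hx) (hAnxt x hx) (hBne x (hAzero x hx)) (hBne _ (hAnxt x hx))
            hWne (hAsign x hx)
          exact ⟨ρ s, fun _ =>
            ⟨Or.inl ⟨hρIco x hx s hsmem, hρshift _ hf₂per s hsext⟩, s, hsmem, rfl⟩⟩
      choose Φ hΦ using key
      have hIooSub : ∀ x ∈ F, ∀ r ∈ Ioo x (nxt x), t₀ < r ∧ r < t₀ + 1 := by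
        intro x hx r hr
        obtain ⟨-, -, hxt₀⟩ := hxmemF x hx
        exact ⟨lt_of_le_of_lt hxt₀ hr.1, lt_of_lt_of_le hr.2 (hnxt_le x hx)⟩
      have hρinj : ∀ r r' : ℝ, t₀ < r → r < t₀ + 1 → t₀ < r' → r' < t₀ + 1 →
          ρ r = ρ r' → r = r' := by
        intro r r' h1 h2 h3 h4 heq
        simp only [hρdef] at heq
        split_ifs at heq with ha hb hb <;> linarith
      have hinj : Set.InjOn Φ F := by
        intro x hxF y hyF hxy
        have hxF' : x ∈ F := hxF
        have hyF' : y ∈ F := hyF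
        obtain ⟨-, r, hr, hΦx⟩ := hΦ x hxF'
        obtain ⟨-, r', hr', hΦy⟩ := hΦ y hyF'
        obtain ⟨hra, hrb⟩ := hIooSub x hxF' r hr
        obtain ⟨hra', hrb'⟩ := hIooSub y hyF' r' hr'
        have hreq : r = r' := hρinj r r' hra hrb hra' hrb' (by rw [← hΦx, ← hΦy, hxy])
        rcases lt_trichotomy x y with h | h | h
        · exfalso
          have := hnxt_min x hxF' y hyF' h
          have := hr.2
          have := hr'.1
          linarith [hreq]
        · exact h
        · exfalso
          have := hnxt_min y hyF' x hxF' h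
          have := hr'.2
          have := hr.1
          linarith [hreq]
      have hsub : ↑(F.image Φ) ⊆ extremaSet (fun s => ⟪α s, w₂⟫) ∪ inflectionSet α := by
        intro z hz
        simp only [Finset.coe_image, Set.mem_image, Finset.mem_coe] at hz
        obtain ⟨x, hxF, rfl⟩ := hz
        exact (hΦ x hxF).1
      calc muHat α w₁ = F.card := hmu1
        _ = (F.image Φ).card := (Finset.card_image_of_injOn hinj).symm
        _ = (↑(F.image Φ) : Set ℝ).ncard := (Set.ncard_coe_finset _).symm
        _ ≤ (extremaSet (fun s => ⟪α s, w₂⟫) ∪ inflectionSet α).ncard :=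
            Set.ncard_le_ncard hsub (hS2fin.union hfin)
        _ ≤ (extremaSet (fun s => ⟪α s, w₂⟫)).ncard + (inflectionSet α).ncard :=
            Set.ncard_union_le _ _
        _ = muHat α w₂ + (inflectionSet α).ncard := rfl

end
end
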